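/- arXiv:1902.09111 — 6 statements merged into one kernel-verified Lean document; each statement's English description precedes it below -/
import Mathlib

section
/- The monomial expansion holds: z^m \bar{z}^n = Σ_{r=0}^{min(m,n)} C(m,r) C(n,r) r! ρ^r J_{m−r,n−r}(z,ρ). -/
open Finset

/-- The complex Hermite polynomial `J_{m,n}` in the two independent variables `z` and `w`
(the latter playing the role of `z̄`), with parameter `ρ`. -/
noncomputable def hermiteJ2 (m n : ℕ) (z w : ℂ) (ρ : ℝ) : ℂ :=
  ∑ r ∈ Finset.range (min m n + 1),
    (-1 : ℂ) ^ r * (r.factorial : ℂ) * (m.choose r : ℂ) * (n.choose r : ℂ) *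
      z ^ (m - r) * w ^ (n - r) * (ρ : ℂ) ^ r

private lemma natkey {m n k r : ℕ} (hrk : r ≤ k) (hkm : k ≤ m) (hkn : k ≤ n) :
    m.choose r * n.choose r * r.factorial * (k - r).factorial * (m - r).choose (k - r) *
      (n - r).choose (k - r) = m.choose k * n.choose k * k.factorial * k.choose r := by
  have h1 := Nat.choose_mul (n := m) hrk
  have h2 := Nat.choose_mul (n := n) hrk
  have h3 := Nat.choose_mul_factorial_mul_factorial hrk
  calc m.choose r * n.choose r * r.factorial * (k - r).factorial * (m - r).choose (k - r) *
        (n - r).choose (k - r)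
      = (m.choose r * (m - r).choose (k - r)) * (n.choose r * (n - r).choose (k - r)) *
        (r.factorial * (k - r).factorial) := by ring
    _ = (m.choose k * k.choose r) * (n.choose k * k.choose r) *
        (r.factorial * (k - r).factorial) := by rw [← h1, ← h2]
    _ = m.choose k * n.choose k * (k.choose r * r.factorial * (k - r).factorial) * k.choose r := by
        ring
    _ = m.choose k * n.choose k * k.factorial * k.choose r := by rw [h3]

private lemma altsum (k : ℕ) :
    ∑ r ∈ Finset.range (k + 1), (-1 : ℂ) ^ (k - r) * (k.choose r : ℂ) =
      if k = 0 then 1 else 0 := by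
  have hcast : ((∑ r ∈ Finset.range (k + 1), ((-1) ^ r * k.choose r : ℤ) : ℤ) : ℂ)
      = if k = 0 then 1 else 0 := by
    rw [Int.alternating_sum_range_choose]
    split <;> simp
  push_cast at hcast
  calc ∑ r ∈ Finset.range (k + 1), (-1 : ℂ) ^ (k - r) * (k.choose r : ℂ)
      = (-1 : ℂ) ^ k * ∑ r ∈ Finset.range (k + 1), (-1 : ℂ) ^ r * (k.choose r : ℂ) := by
        rw [Finset.mul_sum]
        refine Finset.sum_congr rfl fun r hr => ?_
        have hrk : r ≤ k := by
          have := Finset.mem_range.mp hr; omega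
        have hk : k + r = (k - r) + 2 * r := by omega
        have : (-1 : ℂ) ^ k * (-1) ^ r = (-1) ^ (k - r) := by
          rw [← pow_add, hk, pow_add, pow_mul]
          norm_num
        rw [← this]; ring
    _ = (-1 : ℂ) ^ k * (if k = 0 then 1 else 0) := by rw [hcast]
    _ = if k = 0 then 1 else 0 := by split <;> simp_all

/-- the monomial expansion
`z^m z̄^n = Σ_{r=0}^{min(m,n)} C(m,r) C(n,r) r! ρ^r J_{m−r,n−r}(z,ρ)`. -/
theorem monomial_expansion (m n : ℕ) (z w : ℂ) (ρ : ℝ) :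
    z ^ m * w ^ n =
      ∑ r ∈ Finset.range (min m n + 1),
        (m.choose r : ℂ) * (n.choose r : ℂ) * (r.factorial : ℂ) * (ρ : ℂ) ^ r *
          hermiteJ2 (m - r) (n - r) z w ρ := by
  set K := min m n with hK
  set f : ℕ → ℕ → ℂ := fun r s =>
    (m.choose r : ℂ) * (n.choose r : ℂ) * (r.factorial : ℂ) * (ρ : ℂ) ^ r *
      ((-1 : ℂ) ^ s * (s.factorial : ℂ) * ((m - r).choose s : ℂ) * ((n - r).choose s : ℂ) *
        z ^ (m - r - s) * w ^ (n - r - s) * (ρ : ℂ) ^ s) with hf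
  have step1 : ∑ r ∈ Finset.range (K + 1),
      (m.choose r : ℂ) * (n.choose r : ℂ) * (r.factorial : ℂ) * (ρ : ℂ) ^ r *
        hermiteJ2 (m - r) (n - r) z w ρ
      = ∑ r ∈ Finset.range (K + 1), ∑ s ∈ Finset.range (K - r + 1), f r s := by
    refine Finset.sum_congr rfl fun r hr => ?_
    have hrK : r ≤ K := by have := Finset.mem_range.mp hr; omega
    have hmin : min (m - r) (n - r) = K - r := by omega
    rw [hermiteJ2, hmin, Finset.mul_sum]
  have step2 : ∑ r ∈ Finset.range (K + 1), ∑ s ∈ Finset.range (K - r + 1), f r s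
      = ∑ k ∈ Finset.range (K + 1), ∑ r ∈ Finset.range (k + 1), f r (k - r) := by
    rw [Finset.sum_sigma' (Finset.range (K + 1)) (fun r => Finset.range (K - r + 1))
      (fun r s => f r s),
      Finset.sum_sigma' (Finset.range (K + 1)) (fun k => Finset.range (k + 1))
      (fun k r => f r (k - r))]
    refine Finset.sum_nbij' (fun p => ⟨p.1 + p.2, p.1⟩) (fun q => ⟨q.2, q.1 - q.2⟩)
      ?_ ?_ ?_ ?_ ?_
    · rintro ⟨r, s⟩ hp
      simp only [Finset.mem_sigma, Finset.mem_range] at hp ⊢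
      omega
    · rintro ⟨k, r⟩ hq
      simp only [Finset.mem_sigma, Finset.mem_range] at hq ⊢
      omega
    · rintro ⟨r, s⟩ hp; simp
    · rintro ⟨k, r⟩ hq
      simp only [Finset.mem_sigma, Finset.mem_range] at hq
      simp only [Sigma.mk.inj_iff, heq_eq_eq]
      refine ⟨by omega, trivial⟩
    · rintro ⟨r, s⟩ hp; simp
  have step3 : ∀ k ∈ Finset.range (K + 1),
      ∑ r ∈ Finset.range (k + 1), f r (k - r)
      = (m.choose k : ℂ) * (n.choose k : ℂ) * (k.factorial : ℂ) * z ^ (m - k) * w ^ (n - k) *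
          (ρ : ℂ) ^ k * (if k = 0 then 1 else 0) := by
    intro k hk
    have hkK : k ≤ K := by have := Finset.mem_range.mp hk; omega
    have hkm : k ≤ m := le_trans hkK (min_le_left _ _)
    have hkn : k ≤ n := le_trans hkK (min_le_right _ _)
    rw [← altsum k, Finset.mul_sum]
    refine Finset.sum_congr rfl fun r hr => ?_
    have hrk : r ≤ k := by have := Finset.mem_range.mp hr; omega
    have key := natkey hrk hkm hkn
    have keyC : (m.choose r : ℂ) * (n.choose r : ℂ) * (r.factorial : ℂ) *
        ((k - r).factorial : ℂ) * ((m - r).choose (k - r) : ℂ) * ((n - r).choose (k - r) : ℂ)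
        = (m.choose k : ℂ) * (n.choose k : ℂ) * (k.factorial : ℂ) * (k.choose r : ℂ) := by
      exact_mod_cast congrArg (Nat.cast : ℕ → ℂ) key
    have e1 : m - r - (k - r) = m - k := by omega
    have e2 : n - r - (k - r) = n - k := by omega
    have e3 : (ρ : ℂ) ^ r * (ρ : ℂ) ^ (k - r) = (ρ : ℂ) ^ k := by
      rw [← pow_add]; congr 1; omega
    simp only [hf, e1, e2]
    linear_combination ((-1 : ℂ) ^ (k - r) * z ^ (m - k) * w ^ (n - k) * (ρ : ℂ) ^ r *
        (ρ : ℂ) ^ (k - r)) * keyC +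
      ((m.choose k : ℂ) * (n.choose k : ℂ) * (k.factorial : ℂ) * (k.choose r : ℂ) *
        (-1 : ℂ) ^ (k - r) * z ^ (m - k) * w ^ (n - k)) * e3
  rw [step1, step2, Finset.sum_congr rfl step3]
  rw [Finset.sum_eq_single_of_mem 0 (Finset.mem_range.mpr (by omega))]
  · simp
  · intro k _ hk0
    simp [hk0]
end

section
/- The product formula for complex Hermite polynomials holds: J_{m,n}(z,ρ) · J_{p,q}(z,ρ) = Σ_{i=0}^{min(m,q)} Σ_{j=0}^{min(n,p)} C(m,i) C(n,j) C(p,j) C(q,i) i! j! ρ^{i+j} J_{m+p−i−j, n+q−i−j}(z,ρ). -/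
open Finset

set_option maxHeartbeats 1000000

lemma hj_ext (m n : ℕ) (z w : ℂ) (ρ : ℝ) {N : ℕ} (h : min m n < N) :
    hermiteJ2 m n z w ρ = ∑ r ∈ Finset.range N,
      (-1 : ℂ) ^ r * (r.factorial : ℂ) * (m.choose r : ℂ) * (n.choose r : ℂ) *
        z ^ (m - r) * w ^ (n - r) * (ρ : ℂ) ^ r := by
  unfold hermiteJ2
  apply Finset.sum_subset
  · intro x hx; simp only [Finset.mem_range] at *; omega
  · intro r hr hrn
    simp only [Finset.mem_range] at hr hrn
    have : m < r ∨ n < r := by omega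
    rcases this with h' | h' <;> simp [Nat.choose_eq_zero_of_lt h']

lemma aux_c2 (n k : ℕ) : (k+1) * n.choose (k+1) = n * ((n-1).choose k) := by
  cases n with
  | zero => simp
  | succ n' => simpa [mul_comm] using (Nat.add_one_mul_choose_eq n' k).symm

lemma z_mul_J (m n : ℕ) (z w : ℂ) (ρ : ℝ) :
    z * hermiteJ2 m n z w ρ =
      hermiteJ2 (m+1) n z w ρ + ρ * n * hermiteJ2 m (n-1) z w ρ := by
  have h1 : z * hermiteJ2 m n z w ρ = ∑ r ∈ Finset.range (m+n+2),
      (-1 : ℂ) ^ r * (r.factorial : ℂ) * (m.choose r : ℂ) * (n.choose r : ℂ) *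
        z ^ (m + 1 - r) * w ^ (n - r) * (ρ : ℂ) ^ r := by
    rw [hj_ext m n z w ρ (show min m n < m+n+2 by omega), Finset.mul_sum]
    refine Finset.sum_congr rfl fun r hr => ?_
    by_cases hrm : r ≤ m
    · rw [show m + 1 - r = (m - r) + 1 by omega, pow_succ]; ring
    · simp [Nat.choose_eq_zero_of_lt (show m < r by omega)]
  rw [h1, hj_ext (m+1) n z w ρ (show min (m+1) n < m+n+2 by omega),
    hj_ext m (n-1) z w ρ (show min m (n-1) < m+n+1 by omega)]
  have key : (∑ r ∈ Finset.range (m+n+2),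
      (-1 : ℂ) ^ r * (r.factorial : ℂ) * (m.choose r : ℂ) * (n.choose r : ℂ) *
        z ^ (m + 1 - r) * w ^ (n - r) * (ρ : ℂ) ^ r)
      - (∑ r ∈ Finset.range (m+n+2),
        (-1 : ℂ) ^ r * (r.factorial : ℂ) * ((m+1).choose r : ℂ) * (n.choose r : ℂ) *
        z ^ (m + 1 - r) * w ^ (n - r) * (ρ : ℂ) ^ r) =
      ρ * n * ∑ r ∈ Finset.range (m+n+1),
      (-1 : ℂ) ^ r * (r.factorial : ℂ) * (m.choose r : ℂ) * ((n-1).choose r : ℂ) *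
        z ^ (m - r) * w ^ (n - 1 - r) * (ρ : ℂ) ^ r := by
    rw [← Finset.sum_sub_distrib, Finset.sum_range_succ', Finset.mul_sum]
    simp only [Nat.choose_zero_right, sub_self, add_zero]

    refine Finset.sum_congr rfl fun r hr => ?_
    have e1 : m + 1 - (r+1) = m - r := by omega
    have e2 : n - (r+1) = n - 1 - r := by omega
    have c1 : (((m+1)).choose (r+1) : ℂ) = (m.choose r : ℂ) + (m.choose (r+1) : ℂ) := by
      rw [Nat.choose_succ_succ]; push_cast; ring
    have c2 : ((r:ℂ)+1) * ((n.choose (r+1) : ℕ) : ℂ) = (n : ℂ) * (((n-1).choose r : ℕ) : ℂ) := by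
      exact_mod_cast congrArg (Nat.cast : ℕ → ℂ) (aux_c2 n r)
    have f1 : (((r+1).factorial : ℕ) : ℂ) = ((r:ℂ)+1) * (r.factorial : ℂ) := by
      push_cast [Nat.factorial_succ]; ring
    rw [e1, e2, c1, f1, pow_succ (-1 : ℂ) r, pow_succ (ρ:ℂ) r]
    linear_combination (-1:ℂ)^r * (r.factorial : ℂ) * (m.choose r : ℂ) * z ^ (m-r) * w ^ (n-1-r) * (ρ:ℂ)^r * (ρ:ℂ) * c2
  linear_combination key

lemma hj_symm (m n : ℕ) (z w : ℂ) (ρ : ℝ) :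
    hermiteJ2 m n z w ρ = hermiteJ2 n m w z ρ := by
  unfold hermiteJ2
  rw [min_comm]
  exact Finset.sum_congr rfl fun r hr => by ring

lemma w_mul_J (m n : ℕ) (z w : ℂ) (ρ : ℝ) :
    w * hermiteJ2 m n z w ρ =
      hermiteJ2 m (n+1) z w ρ + ρ * m * hermiteJ2 (m-1) n z w ρ := by
  rw [hj_symm m n z w ρ, hj_symm m (n+1) z w ρ, hj_symm (m-1) n z w ρ]
  exact z_mul_J n m w z ρ

lemma J_zero_left (n : ℕ) (z w : ℂ) (ρ : ℝ) :
    hermiteJ2 0 n z w ρ = w ^ n := by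
  unfold hermiteJ2; simp

lemma base_case (n p q : ℕ) (z w : ℂ) (ρ : ℝ) :
    hermiteJ2 0 n z w ρ * hermiteJ2 p q z w ρ =
      ∑ j ∈ Finset.range (n+1),
        (n.choose j : ℂ) * (p.choose j : ℂ) * (j.factorial : ℂ) * (ρ : ℂ) ^ j *
          hermiteJ2 (p - j) (n + q - j) z w ρ := by
  induction n with
  | zero => simp [J_zero_left]
  | succ n ih =>
    rw [show hermiteJ2 0 (n+1) z w ρ = w * hermiteJ2 0 n z w ρ by
        rw [J_zero_left, J_zero_left, pow_succ]; ring,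
      mul_assoc, ih, Finset.mul_sum]
    have L1 : ∀ j ∈ Finset.range (n+1),
        w * ((n.choose j : ℂ) * (p.choose j : ℂ) * (j.factorial : ℂ) * (ρ : ℂ) ^ j *
          hermiteJ2 (p - j) (n + q - j) z w ρ) =
        (n.choose j : ℂ) * (p.choose j : ℂ) * (j.factorial : ℂ) * (ρ : ℂ) ^ j *
          hermiteJ2 (p - j) (n + 1 + q - j) z w ρ
        + (n.choose j : ℂ) * (p.choose (j+1) : ℂ) * ((j+1).factorial : ℂ) * (ρ : ℂ) ^ (j+1) *
          hermiteJ2 (p - j - 1) (n + q - j) z w ρ := by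
      intro j hj
      simp only [Finset.mem_range] at hj
      have hw := w_mul_J (p - j) (n + q - j) z w ρ
      rw [show n + q - j + 1 = n + 1 + q - j by omega] at hw
      have cc : ((p.choose (j+1) : ℕ) : ℂ) * ((j:ℂ)+1) = (p.choose j : ℂ) * ((p - j : ℕ) : ℂ) := by
        exact_mod_cast congrArg (Nat.cast : ℕ → ℂ) (Nat.choose_succ_right_eq p j)
      have f1 : (((j+1).factorial : ℕ) : ℂ) = ((j:ℂ)+1) * (j.factorial : ℂ) := by
        push_cast [Nat.factorial_succ]; ring
      calc w * ((n.choose j : ℂ) * (p.choose j : ℂ) * (j.factorial : ℂ) * (ρ : ℂ) ^ j *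
              hermiteJ2 (p - j) (n + q - j) z w ρ)
          = (n.choose j : ℂ) * (p.choose j : ℂ) * (j.factorial : ℂ) * (ρ : ℂ) ^ j *
              (w * hermiteJ2 (p - j) (n + q - j) z w ρ) := by ring
        _ = _ := by
            rw [hw, f1, pow_succ (ρ:ℂ) j]
            linear_combination (-((n.choose j : ℂ)) * (j.factorial : ℂ) * (ρ:ℂ)^j * (ρ:ℂ) *
              hermiteJ2 (p - j - 1) (n + q - j) z w ρ) * cc
    rw [Finset.sum_congr rfl L1, Finset.sum_add_distrib]
    -- RHS reorganization
    have R1 : ∑ j ∈ Finset.range (n+1+1),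
        ((n+1).choose j : ℂ) * (p.choose j : ℂ) * (j.factorial : ℂ) * (ρ : ℂ) ^ j *
          hermiteJ2 (p - j) (n + 1 + q - j) z w ρ
        = (∑ j ∈ Finset.range (n+1),
            ((n+1).choose (j+1) : ℂ) * (p.choose (j+1) : ℂ) * ((j+1).factorial : ℂ) * (ρ : ℂ) ^ (j+1) *
              hermiteJ2 (p - (j+1)) (n + 1 + q - (j+1)) z w ρ)
          + hermiteJ2 p (n + 1 + q) z w ρ := by
      rw [Finset.sum_range_succ']
      simp
    rw [R1]
    have split : ∀ j ∈ Finset.range (n+1),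
        ((n+1).choose (j+1) : ℂ) * (p.choose (j+1) : ℂ) * ((j+1).factorial : ℂ) * (ρ : ℂ) ^ (j+1) *
          hermiteJ2 (p - (j+1)) (n + 1 + q - (j+1)) z w ρ
        = (n.choose (j+1) : ℂ) * (p.choose (j+1) : ℂ) * ((j+1).factorial : ℂ) * (ρ : ℂ) ^ (j+1) *
          hermiteJ2 (p - (j+1)) (n + 1 + q - (j+1)) z w ρ
        + (n.choose j : ℂ) * (p.choose (j+1) : ℂ) * ((j+1).factorial : ℂ) * (ρ : ℂ) ^ (j+1) *
          hermiteJ2 (p - j - 1) (n + q - j) z w ρ := by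
      intro j hj
      have e1 : p - (j+1) = p - j - 1 := by omega
      have e2 : n + 1 + q - (j+1) = n + q - j := by omega
      have c1 : (((n+1).choose (j+1) : ℕ) : ℂ) = (n.choose j : ℂ) + (n.choose (j+1) : ℂ) := by
        rw [Nat.choose_succ_succ]; push_cast; ring
      rw [e1, e2, c1]; ring
    rw [Finset.sum_congr rfl split, Finset.sum_add_distrib]
    have first : ∑ j ∈ Finset.range (n+1),
        (n.choose j : ℂ) * (p.choose j : ℂ) * (j.factorial : ℂ) * (ρ : ℂ) ^ j *
          hermiteJ2 (p - j) (n + 1 + q - j) z w ρ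
        = (∑ j ∈ Finset.range (n+1),
            (n.choose (j+1) : ℂ) * (p.choose (j+1) : ℂ) * ((j+1).factorial : ℂ) * (ρ : ℂ) ^ (j+1) *
              hermiteJ2 (p - (j+1)) (n + 1 + q - (j+1)) z w ρ)
          + hermiteJ2 p (n + 1 + q) z w ρ := by
      have ext : ∑ j ∈ Finset.range (n+2),
          (n.choose j : ℂ) * (p.choose j : ℂ) * (j.factorial : ℂ) * (ρ : ℂ) ^ j *
            hermiteJ2 (p - j) (n + 1 + q - j) z w ρ
          = ∑ j ∈ Finset.range (n+1),
          (n.choose j : ℂ) * (p.choose j : ℂ) * (j.factorial : ℂ) * (ρ : ℂ) ^ j *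
            hermiteJ2 (p - j) (n + 1 + q - j) z w ρ := by
        rw [Finset.sum_range_succ, Nat.choose_eq_zero_of_lt (by omega : n < n+1)]
        simp
      rw [← ext, Finset.sum_range_succ']
      simp
    rw [first]
    ring

lemma big (m : ℕ) (p q : ℕ) (z w : ℂ) (ρ : ℝ) : ∀ n : ℕ,
    hermiteJ2 m n z w ρ * hermiteJ2 p q z w ρ =
      ∑ i ∈ Finset.range (m+1), ∑ j ∈ Finset.range (n+1),
        (m.choose i : ℂ) * (n.choose j : ℂ) * (p.choose j : ℂ) * (q.choose i : ℂ) *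
          (i.factorial : ℂ) * (j.factorial : ℂ) * (ρ : ℂ) ^ (i + j) *
          hermiteJ2 (m + p - i - j) (n + q - i - j) z w ρ := by
  induction m with
  | zero =>
    intro n
    rw [base_case n p q z w ρ, Finset.sum_range_one]
    refine Finset.sum_congr rfl fun j hj => ?_
    norm_num
  | succ m ih =>
    intro n
    have hrec : hermiteJ2 (m+1) n z w ρ * hermiteJ2 p q z w ρ =
        z * (hermiteJ2 m n z w ρ * hermiteJ2 p q z w ρ)
        - ρ * n * (hermiteJ2 m (n-1) z w ρ * hermiteJ2 p q z w ρ) := by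
      linear_combination (-(hermiteJ2 p q z w ρ)) * (z_mul_J m n z w ρ)
    rw [hrec, ih n, ih (n-1)]
    have hz : z * (∑ i ∈ Finset.range (m+1), ∑ j ∈ Finset.range (n+1),
        (m.choose i : ℂ) * (n.choose j : ℂ) * (p.choose j : ℂ) * (q.choose i : ℂ) *
          (i.factorial : ℂ) * (j.factorial : ℂ) * (ρ : ℂ) ^ (i + j) *
          hermiteJ2 (m + p - i - j) (n + q - i - j) z w ρ)
        = (∑ i ∈ Finset.range (m+1), ∑ j ∈ Finset.range (n+1),
            (m.choose i : ℂ) * (n.choose j : ℂ) * (p.choose j : ℂ) * (q.choose i : ℂ) *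
              (i.factorial : ℂ) * (j.factorial : ℂ) * (ρ : ℂ) ^ (i + j) *
              hermiteJ2 (m + 1 + p - i - j) (n + q - i - j) z w ρ)
        + (∑ i ∈ Finset.range (m+1), ∑ j ∈ Finset.range (n+1),
            (m.choose i : ℂ) * (n.choose j : ℂ) * (p.choose j : ℂ) * (q.choose (i+1) : ℂ) *
              ((i+1).factorial : ℂ) * (j.factorial : ℂ) * (ρ : ℂ) ^ (i + 1 + j) *
              hermiteJ2 (m + p - i - j) (n + q - i - j - 1) z w ρ)
        + (∑ i ∈ Finset.range (m+1), ∑ j ∈ Finset.range (n+1),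
            (m.choose i : ℂ) * (n.choose j : ℂ) * (p.choose j : ℂ) * (q.choose i : ℂ) *
              (i.factorial : ℂ) * (j.factorial : ℂ) * (ρ : ℂ) ^ (i + j) * (ρ : ℂ) * ((n - j : ℕ) : ℂ) *
              hermiteJ2 (m + p - i - j) (n + q - i - j - 1) z w ρ) := by
      rw [Finset.mul_sum]
      simp only [Finset.mul_sum]
      rw [← Finset.sum_add_distrib, ← Finset.sum_add_distrib]
      refine Finset.sum_congr rfl fun i hi => ?_
      rw [← Finset.sum_add_distrib, ← Finset.sum_add_distrib]
      refine Finset.sum_congr rfl fun j hj => ?_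
      simp only [Finset.mem_range] at hi hj
      by_cases hgood : i ≤ q ∧ j ≤ p
      · obtain ⟨hiq, hjp⟩ := hgood
        have hw := z_mul_J (m + p - i - j) (n + q - i - j) z w ρ
        rw [show m + p - i - j + 1 = m + 1 + p - i - j by omega] at hw
        have hB : ((n + q - i - j : ℕ) : ℂ) = ((q - i : ℕ) : ℂ) + ((n - j : ℕ) : ℂ) := by
          have : (n + q - i - j : ℕ) = (q - i) + (n - j) := by omega
          rw [this]; push_cast; ring
        have cq : ((q.choose (i+1) : ℕ) : ℂ) * ((i:ℂ)+1) = (q.choose i : ℂ) * ((q - i : ℕ) : ℂ) := by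
          exact_mod_cast congrArg (Nat.cast : ℕ → ℂ) (Nat.choose_succ_right_eq q i)
        have f1 : (((i+1).factorial : ℕ) : ℂ) = ((i:ℂ)+1) * (i.factorial : ℂ) := by
          push_cast [Nat.factorial_succ]; ring
        calc z * ((m.choose i : ℂ) * (n.choose j : ℂ) * (p.choose j : ℂ) * (q.choose i : ℂ) *
              (i.factorial : ℂ) * (j.factorial : ℂ) * (ρ : ℂ) ^ (i + j) *
              hermiteJ2 (m + p - i - j) (n + q - i - j) z w ρ)
            = (m.choose i : ℂ) * (n.choose j : ℂ) * (p.choose j : ℂ) * (q.choose i : ℂ) *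
              (i.factorial : ℂ) * (j.factorial : ℂ) * (ρ : ℂ) ^ (i + j) *
              (z * hermiteJ2 (m + p - i - j) (n + q - i - j) z w ρ) := by ring
          _ = _ := by
              rw [hw, hB, f1,
                show (ρ:ℂ) ^ (i + 1 + j) = (ρ:ℂ) ^ (i + j) * (ρ:ℂ) by
                  rw [show i + 1 + j = (i + j) + 1 from by omega, pow_succ]]
              linear_combination (-((m.choose i : ℂ) * (n.choose j : ℂ) * (p.choose j : ℂ) *
                (i.factorial : ℂ) * (j.factorial : ℂ) * (ρ : ℂ) ^ (i + j) * (ρ:ℂ) *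
                hermiteJ2 (m + p - i - j) (n + q - i - j - 1) z w ρ)) * cq
      · have hz0 : (m.choose i : ℂ) * (n.choose j : ℂ) * (p.choose j : ℂ) * (q.choose i : ℂ) = 0 := by
          rcases not_and_or.mp hgood with h' | h'
          · simp [Nat.choose_eq_zero_of_lt (show q < i by omega)]
          · simp [Nat.choose_eq_zero_of_lt (show p < j by omega)]
        have hz1 : (m.choose i : ℂ) * (n.choose j : ℂ) * (p.choose j : ℂ) * (q.choose (i+1) : ℂ) = 0 := by
          rcases not_and_or.mp hgood with h' | h'
          · simp [Nat.choose_eq_zero_of_lt (show q < i + 1 by omega)]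
          · simp [Nat.choose_eq_zero_of_lt (show p < j by omega)]
        rw [hz0, hz1]
        ring
    have h3 : (∑ i ∈ Finset.range (m+1), ∑ j ∈ Finset.range (n+1),
        (m.choose i : ℂ) * (n.choose j : ℂ) * (p.choose j : ℂ) * (q.choose i : ℂ) *
          (i.factorial : ℂ) * (j.factorial : ℂ) * (ρ : ℂ) ^ (i + j) * (ρ : ℂ) * ((n - j : ℕ) : ℂ) *
          hermiteJ2 (m + p - i - j) (n + q - i - j - 1) z w ρ)
        = (ρ : ℂ) * (n : ℂ) * (∑ i ∈ Finset.range (m+1), ∑ j ∈ Finset.range (n-1+1),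
          (m.choose i : ℂ) * ((n-1).choose j : ℂ) * (p.choose j : ℂ) * (q.choose i : ℂ) *
            (i.factorial : ℂ) * (j.factorial : ℂ) * (ρ : ℂ) ^ (i + j) *
            hermiteJ2 (m + p - i - j) (n - 1 + q - i - j) z w ρ) := by
      by_cases hn : n = 0
      · subst hn; simp
      · have hn1 : 1 ≤ n := by omega
        rw [Finset.mul_sum]
        refine Finset.sum_congr rfl fun i hi => ?_
        rw [Finset.mul_sum]
        rw [show n + 1 = (n-1+1)+1 by omega, Finset.sum_range_succ]
        rw [show n - (n-1+1) = 0 by omega]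
        norm_num
        refine Finset.sum_congr rfl fun j hj => ?_
        simp only [Finset.mem_range] at hj
        have cn : ((n.choose j : ℕ) : ℂ) * ((n - j : ℕ) : ℂ) = ((n-1).choose j : ℂ) * (n : ℂ) := by
          have h := Nat.choose_mul_succ_eq (n-1) j
          rw [show n - 1 + 1 = n by omega] at h
          exact_mod_cast congrArg (Nat.cast : ℕ → ℂ) h.symm
        rw [show n - 1 + q - i - j = n + q - i - j - 1 by omega]
        linear_combination ((m.choose i : ℂ) * (p.choose j : ℂ) * (q.choose i : ℂ) *
          (i.factorial : ℂ) * (j.factorial : ℂ) * (ρ : ℂ) ^ (i + j) * (ρ:ℂ) *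
          hermiteJ2 (m + p - i - j) (n + q - i - j - 1) z w ρ) * cn
    have h12 : (∑ i ∈ Finset.range (m+1), ∑ j ∈ Finset.range (n+1),
        (m.choose i : ℂ) * (n.choose j : ℂ) * (p.choose j : ℂ) * (q.choose i : ℂ) *
          (i.factorial : ℂ) * (j.factorial : ℂ) * (ρ : ℂ) ^ (i + j) *
          hermiteJ2 (m + 1 + p - i - j) (n + q - i - j) z w ρ)
        + (∑ i ∈ Finset.range (m+1), ∑ j ∈ Finset.range (n+1),
          (m.choose i : ℂ) * (n.choose j : ℂ) * (p.choose j : ℂ) * (q.choose (i+1) : ℂ) *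
            ((i+1).factorial : ℂ) * (j.factorial : ℂ) * (ρ : ℂ) ^ (i + 1 + j) *
            hermiteJ2 (m + p - i - j) (n + q - i - j - 1) z w ρ)
        = ∑ i ∈ Finset.range (m+1+1), ∑ j ∈ Finset.range (n+1),
          ((m+1).choose i : ℂ) * (n.choose j : ℂ) * (p.choose j : ℂ) * (q.choose i : ℂ) *
            (i.factorial : ℂ) * (j.factorial : ℂ) * (ρ : ℂ) ^ (i + j) *
            hermiteJ2 (m + 1 + p - i - j) (n + q - i - j) z w ρ := by
      rw [Finset.sum_range_succ' (fun i => ∑ j ∈ Finset.range (n+1),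
          ((m+1).choose i : ℂ) * (n.choose j : ℂ) * (p.choose j : ℂ) * (q.choose i : ℂ) *
            (i.factorial : ℂ) * (j.factorial : ℂ) * (ρ : ℂ) ^ (i + j) *
            hermiteJ2 (m + 1 + p - i - j) (n + q - i - j) z w ρ) (m+1)]
      have pascal : ∀ i ∈ Finset.range (m+1),
          (∑ j ∈ Finset.range (n+1),
            ((m+1).choose (i+1) : ℂ) * (n.choose j : ℂ) * (p.choose j : ℂ) * (q.choose (i+1) : ℂ) *
              ((i+1).factorial : ℂ) * (j.factorial : ℂ) * (ρ : ℂ) ^ (i+1 + j) *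
              hermiteJ2 (m + 1 + p - (i+1) - j) (n + q - (i+1) - j) z w ρ)
          = (∑ j ∈ Finset.range (n+1),
              (m.choose (i+1) : ℂ) * (n.choose j : ℂ) * (p.choose j : ℂ) * (q.choose (i+1) : ℂ) *
                ((i+1).factorial : ℂ) * (j.factorial : ℂ) * (ρ : ℂ) ^ (i+1 + j) *
                hermiteJ2 (m + 1 + p - (i+1) - j) (n + q - (i+1) - j) z w ρ)
            + (∑ j ∈ Finset.range (n+1),
              (m.choose i : ℂ) * (n.choose j : ℂ) * (p.choose j : ℂ) * (q.choose (i+1) : ℂ) *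
                ((i+1).factorial : ℂ) * (j.factorial : ℂ) * (ρ : ℂ) ^ (i + 1 + j) *
                hermiteJ2 (m + p - i - j) (n + q - i - j - 1) z w ρ) := by
        intro i hi
        rw [← Finset.sum_add_distrib]
        refine Finset.sum_congr rfl fun j hj => ?_
        have c1 : (((m+1).choose (i+1) : ℕ) : ℂ) = (m.choose i : ℂ) + (m.choose (i+1) : ℂ) := by
          rw [Nat.choose_succ_succ]; push_cast; ring
        rw [c1, show m + 1 + p - (i+1) - j = m + p - i - j by omega,
          show n + q - (i+1) - j = n + q - i - j - 1 by omega]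
        ring
      rw [Finset.sum_congr rfl pascal, Finset.sum_add_distrib]
      have claimA : (∑ i ∈ Finset.range (m+1), ∑ j ∈ Finset.range (n+1),
          (m.choose i : ℂ) * (n.choose j : ℂ) * (p.choose j : ℂ) * (q.choose i : ℂ) *
            (i.factorial : ℂ) * (j.factorial : ℂ) * (ρ : ℂ) ^ (i + j) *
            hermiteJ2 (m + 1 + p - i - j) (n + q - i - j) z w ρ)
          = (∑ i ∈ Finset.range (m+1), ∑ j ∈ Finset.range (n+1),
              (m.choose (i+1) : ℂ) * (n.choose j : ℂ) * (p.choose j : ℂ) * (q.choose (i+1) : ℂ) *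
                ((i+1).factorial : ℂ) * (j.factorial : ℂ) * (ρ : ℂ) ^ (i+1 + j) *
                hermiteJ2 (m + 1 + p - (i+1) - j) (n + q - (i+1) - j) z w ρ)
            + ∑ j ∈ Finset.range (n+1),
              ((m+1).choose 0 : ℂ) * (n.choose j : ℂ) * (p.choose j : ℂ) * (q.choose 0 : ℂ) *
                ((0:ℕ).factorial : ℂ) * (j.factorial : ℂ) * (ρ : ℂ) ^ (0 + j) *
                hermiteJ2 (m + 1 + p - 0 - j) (n + q - 0 - j) z w ρ := by
        have ext : (∑ i ∈ Finset.range (m+1+1), ∑ j ∈ Finset.range (n+1),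
            (m.choose i : ℂ) * (n.choose j : ℂ) * (p.choose j : ℂ) * (q.choose i : ℂ) *
              (i.factorial : ℂ) * (j.factorial : ℂ) * (ρ : ℂ) ^ (i + j) *
              hermiteJ2 (m + 1 + p - i - j) (n + q - i - j) z w ρ)
            = ∑ i ∈ Finset.range (m+1), ∑ j ∈ Finset.range (n+1),
            (m.choose i : ℂ) * (n.choose j : ℂ) * (p.choose j : ℂ) * (q.choose i : ℂ) *
              (i.factorial : ℂ) * (j.factorial : ℂ) * (ρ : ℂ) ^ (i + j) *
              hermiteJ2 (m + 1 + p - i - j) (n + q - i - j) z w ρ := by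
          rw [Finset.sum_range_succ, Nat.choose_eq_zero_of_lt (by omega : m < m+1)]
          simp
        rw [← ext, Finset.sum_range_succ' (fun i => ∑ j ∈ Finset.range (n+1),
            (m.choose i : ℂ) * (n.choose j : ℂ) * (p.choose j : ℂ) * (q.choose i : ℂ) *
              (i.factorial : ℂ) * (j.factorial : ℂ) * (ρ : ℂ) ^ (i + j) *
              hermiteJ2 (m + 1 + p - i - j) (n + q - i - j) z w ρ) (m+1)]
        norm_num
      rw [claimA]
      ring
    linear_combination hz + h3 + h12

/-- the product formula for complex Hermite polynomials:
`J_{m,n} J_{p,q} = Σ_{i=0}^{min(m,q)} Σ_{j=0}^{min(n,p)} C(m,i) C(n,j) C(p,j) C(q,i) i! j!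
ρ^{i+j} J_{m+p−i−j, n+q−i−j}`. -/
theorem hermiteJ2_product (m n p q : ℕ) (z w : ℂ) (ρ : ℝ) :
    hermiteJ2 m n z w ρ * hermiteJ2 p q z w ρ =
      ∑ i ∈ Finset.range (min m q + 1), ∑ j ∈ Finset.range (min n p + 1),
        (m.choose i : ℂ) * (n.choose j : ℂ) * (p.choose j : ℂ) * (q.choose i : ℂ) *
          (i.factorial : ℂ) * (j.factorial : ℂ) * (ρ : ℂ) ^ (i + j) *
          hermiteJ2 (m + p - i - j) (n + q - i - j) z w ρ := by
  have step1 : (∑ i ∈ Finset.range (min m q + 1), ∑ j ∈ Finset.range (min n p + 1),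
        (m.choose i : ℂ) * (n.choose j : ℂ) * (p.choose j : ℂ) * (q.choose i : ℂ) *
          (i.factorial : ℂ) * (j.factorial : ℂ) * (ρ : ℂ) ^ (i + j) *
          hermiteJ2 (m + p - i - j) (n + q - i - j) z w ρ)
      = ∑ i ∈ Finset.range (min m q + 1), ∑ j ∈ Finset.range (n + 1),
        (m.choose i : ℂ) * (n.choose j : ℂ) * (p.choose j : ℂ) * (q.choose i : ℂ) *
          (i.factorial : ℂ) * (j.factorial : ℂ) * (ρ : ℂ) ^ (i + j) *
          hermiteJ2 (m + p - i - j) (n + q - i - j) z w ρ := by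
    refine Finset.sum_congr rfl fun i hi => Finset.sum_subset ?_ ?_
    · intro x hx; simp only [Finset.mem_range] at *; omega
    · intro j hj hj'
      simp only [Finset.mem_range] at hj hj'
      have : p < j := by omega
      simp [Nat.choose_eq_zero_of_lt this]
  have step2 : (∑ i ∈ Finset.range (min m q + 1), ∑ j ∈ Finset.range (n + 1),
        (m.choose i : ℂ) * (n.choose j : ℂ) * (p.choose j : ℂ) * (q.choose i : ℂ) *
          (i.factorial : ℂ) * (j.factorial : ℂ) * (ρ : ℂ) ^ (i + j) *
          hermiteJ2 (m + p - i - j) (n + q - i - j) z w ρ)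
      = ∑ i ∈ Finset.range (m + 1), ∑ j ∈ Finset.range (n + 1),
        (m.choose i : ℂ) * (n.choose j : ℂ) * (p.choose j : ℂ) * (q.choose i : ℂ) *
          (i.factorial : ℂ) * (j.factorial : ℂ) * (ρ : ℂ) ^ (i + j) *
          hermiteJ2 (m + p - i - j) (n + q - i - j) z w ρ := by
    refine Finset.sum_subset ?_ ?_
    · intro x hx; simp only [Finset.mem_range] at *; omega
    · intro i hi hi'
      simp only [Finset.mem_range] at hi hi'
      have : q < i := by omega
      refine Finset.sum_eq_zero fun j hj => ?_
      simp [Nat.choose_eq_zero_of_lt this]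
  rw [step1, step2, big m p q z w ρ n]
end

section
/- The family {(m! n! ρ^{m+n})^{−1/2} J_{m,n}(z,ρ) : m, n ≥ 0} is orthonormal in L²(ℂ, μ), where dμ = (πρ)^{−1} exp(−(x²+y²)/ρ) dx dy; i.e., ∫_ℂ J_{m,n}(z,ρ) \overline{J_{p,q}(z,ρ)} dμ(z) = m! n! ρ^{m+n} if (m,n) = (p,q) and 0 otherwise. -/
open Finset MeasureTheory

/-- The complex Hermite polynomial `J_{m,n}(z, ρ)`. -/
noncomputable def hermiteJ (m n : ℕ) (z : ℂ) (ρ : ℝ) : ℂ :=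
  ∑ r ∈ Finset.range (min m n + 1),
    (-1 : ℂ) ^ r * (r.factorial : ℂ) * (m.choose r : ℂ) * (n.choose r : ℂ) *
      z ^ (m - r) * (starRingEnd ℂ z) ^ (n - r) * (ρ : ℂ) ^ r

/-- The complex Gaussian measure `dμ = (πρ)⁻¹ exp(−|z|²/ρ) dx dy` on `ℂ`. -/
noncomputable def gaussianMeasureC (ρ : ℝ) : Measure ℂ :=
  (volume : Measure ℂ).withDensity fun z =>
    ENNReal.ofReal ((Real.pi * ρ)⁻¹ * Real.exp (-(Complex.normSq z) / ρ))

open Real Set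
open scoped NNReal ENNReal


noncomputable def hS (m n p q : ℕ) : ℂ :=
  ∑ r ∈ range (m+1), ∑ s ∈ range (q+1),
    (-1:ℂ)^(r+s) * (r.factorial : ℂ) * (s.factorial : ℂ) * (m.choose r : ℂ) * (n.choose r : ℂ)
      * (p.choose s : ℂ) * (q.choose s : ℂ) * (((m-r)+(q-s)).factorial : ℂ)

lemma cast_choose1 (n r : ℕ) :
    ((r:ℂ)+1) * (n.choose (r+1) : ℂ) = ((n:ℂ) - r) * (n.choose r : ℂ) := by
  rcases le_or_gt r n with h | h
  · have h1 := Nat.choose_succ_right_eq n r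
    have h2 : ((n.choose (r+1) * (r+1) : ℕ) : ℂ) = ((n.choose r * (n - r) : ℕ) : ℂ) := by
      exact_mod_cast congrArg (Nat.cast : ℕ → ℂ) h1
    push_cast [Nat.cast_sub h] at h2
    linear_combination h2
  · rw [Nat.choose_eq_zero_of_lt h, Nat.choose_eq_zero_of_lt (by omega)]
    simp

lemma cast_choose2 (p s : ℕ) :
    ((p:ℂ) - s) * (p.choose s : ℂ) = (p:ℂ) * ((p-1).choose s : ℂ) := by
  cases p with
  | zero =>
    cases s with
    | zero => simp
    | succ t => simp [Nat.choose]
  | succ t =>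
    rcases le_or_gt s (t+1) with h | h
    · have h1 : (t+1) * t.choose s = (t+1).choose s * ((t+1) - s) := by
        rw [Nat.add_one_mul_choose_eq, Nat.choose_succ_right_eq]
      have h2 : (((t+1) * t.choose s : ℕ) : ℂ) = (((t+1).choose s * ((t+1) - s) : ℕ) : ℂ) := by
        exact_mod_cast congrArg (Nat.cast : ℕ → ℂ) h1
      push_cast [Nat.cast_sub h] at h2
      simp only [Nat.add_sub_cancel]
      push_cast
      linear_combination -h2
    · rw [Nat.choose_eq_zero_of_lt h, Nat.choose_eq_zero_of_lt (by omega)]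
      simp

lemma alt_sum (n : ℕ) :
    ∑ i ∈ range (n+1), (-1:ℂ)^i * (n.choose i : ℂ) = if n = 0 then 1 else 0 := by
  have h := Int.alternating_sum_range_choose (n := n)
  have h2 : ((∑ i ∈ range (n+1), (-1:ℤ)^i * (n.choose i : ℤ) : ℤ) : ℂ)
      = ((if n = 0 then 1 else 0 : ℤ) : ℂ) := congrArg (Int.cast : ℤ → ℂ) h
  push_cast at h2
  rw [h2]


lemma row (m n b : ℕ) :
    ∑ r ∈ range (m+2), (-1:ℂ)^r * (r.factorial : ℂ) * ((m+1).choose r : ℂ) * (n.choose r : ℂ)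
        * ((m+1-r+b).factorial : ℂ)
    = ((m:ℂ)+1+b-n) * ∑ r ∈ range (m+1), (-1:ℂ)^r * (r.factorial : ℂ) * (m.choose r : ℂ)
        * (n.choose r : ℂ) * ((m-r+b).factorial : ℂ) := by
  have split : ∀ r ∈ range (m+2),
      (-1:ℂ)^r * (r.factorial : ℂ) * ((m+1).choose r : ℂ) * (n.choose r : ℂ)
          * ((m+1-r+b).factorial : ℂ)
      = ((-1:ℂ)^r * (r.factorial : ℂ) * (m.choose r : ℂ) * (n.choose r : ℂ)
          * ((m+1-r+b).factorial : ℂ))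
        + (((-1:ℂ)^r * (r.factorial : ℂ) * ((m+1).choose r : ℂ) * (n.choose r : ℂ)
            * ((m+1-r+b).factorial : ℂ))
          - ((-1:ℂ)^r * (r.factorial : ℂ) * (m.choose r : ℂ) * (n.choose r : ℂ)
            * ((m+1-r+b).factorial : ℂ))) := fun r _ => by ring
  rw [sum_congr rfl split, sum_add_distrib]
  have hA : ∑ r ∈ range (m+2), (-1:ℂ)^r * (r.factorial : ℂ) * (m.choose r : ℂ)
        * (n.choose r : ℂ) * ((m+1-r+b).factorial : ℂ)
      = ∑ r ∈ range (m+1), (-1:ℂ)^r * (r.factorial : ℂ) * (m.choose r : ℂ)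
        * (n.choose r : ℂ) * ((m+1-r+b).factorial : ℂ) := by
    rw [sum_range_succ]
    simp [Nat.choose_succ_self]
  have hB : ∑ r ∈ range (m+2),
        (((-1:ℂ)^r * (r.factorial : ℂ) * ((m+1).choose r : ℂ) * (n.choose r : ℂ)
            * ((m+1-r+b).factorial : ℂ))
          - ((-1:ℂ)^r * (r.factorial : ℂ) * (m.choose r : ℂ) * (n.choose r : ℂ)
            * ((m+1-r+b).factorial : ℂ)))
      = ∑ r ∈ range (m+1),
          -((-1:ℂ)^r * (((r+1).factorial : ℂ)) * (m.choose r : ℂ) * (n.choose (r+1) : ℂ)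
            * ((m-r+b).factorial : ℂ)) := by
    rw [sum_range_succ']
    simp only [Nat.choose_zero_right, pow_zero, Nat.choose_succ_succ,
      Nat.succ_sub_succ_eq_sub, sub_self, add_zero]
    refine sum_congr rfl fun r _ => ?_
    push_cast
    ring
  rw [hA, hB, ← sum_add_distrib, mul_sum]
  refine sum_congr rfl fun r hr => ?_
  rw [Finset.mem_range] at hr
  have hr' : r ≤ m := by omega
  have e1 : m+1-r+b = (m-r+b)+1 := by omega
  rw [e1, Nat.factorial_succ]
  have e2 : ((m - r + b : ℕ) : ℂ) = (m:ℂ) - r + b := by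
    push_cast [Nat.cast_sub hr']; ring
  have e3 := cast_choose1 n r
  push_cast [e2, Nat.factorial_succ]
  push_cast at e3
  linear_combination (-((-1:ℂ)^r * (r.factorial : ℂ) * (m.choose r : ℂ)
    * ((m-r+b).factorial : ℂ))) * e3

lemma hS_rec (m n p q : ℕ) (h : (m+1) + q = n + p) :
    hS (m+1) n p q = (p:ℂ) * hS m n (p-1) q := by
  have hcast : ((m:ℂ)+1+(q:ℂ)) = (n:ℂ) + p := by
    have := congrArg (Nat.cast : ℕ → ℂ) h; push_cast at this; linear_combination this
  calc hS (m+1) n p q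
      = ∑ s ∈ range (q+1), ∑ r ∈ range (m+2),
          (-1:ℂ)^(r+s) * (r.factorial : ℂ) * (s.factorial : ℂ) * ((m+1).choose r : ℂ)
            * (n.choose r : ℂ) * (p.choose s : ℂ) * (q.choose s : ℂ)
            * (((m+1-r)+(q-s)).factorial : ℂ) := by
        rw [hS]; exact sum_comm
    _ = ∑ s ∈ range (q+1), (p:ℂ) * ∑ r ∈ range (m+1),
          (-1:ℂ)^(r+s) * (r.factorial : ℂ) * (s.factorial : ℂ) * (m.choose r : ℂ)
            * (n.choose r : ℂ) * ((p-1).choose s : ℂ) * (q.choose s : ℂ)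
            * (((m-r)+(q-s)).factorial : ℂ) := by
        refine sum_congr rfl fun s hs => ?_
        rw [Finset.mem_range] at hs
        have hs' : s ≤ q := by omega
        calc ∑ r ∈ range (m+2),
              (-1:ℂ)^(r+s) * (r.factorial : ℂ) * (s.factorial : ℂ) * ((m+1).choose r : ℂ)
                * (n.choose r : ℂ) * (p.choose s : ℂ) * (q.choose s : ℂ)
                * (((m+1-r)+(q-s)).factorial : ℂ)
            = ((-1:ℂ)^s * (s.factorial : ℂ) * (p.choose s : ℂ) * (q.choose s : ℂ)) *
                ∑ r ∈ range (m+2), (-1:ℂ)^r * (r.factorial : ℂ) * ((m+1).choose r : ℂ)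
                  * (n.choose r : ℂ) * ((m+1-r+(q-s)).factorial : ℂ) := by
              rw [mul_sum]; exact sum_congr rfl fun r _ => by ring
          _ = ((-1:ℂ)^s * (s.factorial : ℂ) * (p.choose s : ℂ) * (q.choose s : ℂ)) *
                (((m:ℂ)+1+(q-s:ℕ)-n) * ∑ r ∈ range (m+1), (-1:ℂ)^r * (r.factorial : ℂ)
                  * (m.choose r : ℂ) * (n.choose r : ℂ) * ((m-r+(q-s)).factorial : ℂ)) := by
              rw [row]
          _ = (p:ℂ) * ∑ r ∈ range (m+1),
                (-1:ℂ)^(r+s) * (r.factorial : ℂ) * (s.factorial : ℂ) * (m.choose r : ℂ)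
                  * (n.choose r : ℂ) * ((p-1).choose s : ℂ) * (q.choose s : ℂ)
                  * (((m-r)+(q-s)).factorial : ℂ) := by
              have e1 : ((m:ℂ)+1+(q-s:ℕ)-n) = (p:ℂ) - s := by
                push_cast [Nat.cast_sub hs']; linear_combination hcast
              rw [e1, mul_sum, mul_sum, mul_sum]
              refine sum_congr rfl fun r _ => ?_
              have e2 := cast_choose2 p s
              linear_combination ((-1:ℂ)^(r+s) * (r.factorial : ℂ) * (s.factorial : ℂ)
                * (m.choose r : ℂ) * (n.choose r : ℂ) * (q.choose s : ℂ)
                * (((m-r)+(q-s)).factorial : ℂ)) * e2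
    _ = (p:ℂ) * hS m n (p-1) q := by
        rw [hS, ← mul_sum]
        congr 1
        exact sum_comm

lemma hS_eq : ∀ m n p q : ℕ, m + q = n + p →
    hS m n p q = if m = p ∧ n = q then ((m.factorial : ℂ) * (n.factorial : ℂ)) else 0 := by
  intro m
  induction m with
  | zero =>
    intro n p q h
    have hpq : p ≤ q := by omega
    rw [hS, sum_range_one]
    have e1 : ∀ s ∈ range (q+1),
        (-1:ℂ)^(0+s) * ((Nat.factorial 0 : ℕ) : ℂ) * (s.factorial : ℂ)
          * ((Nat.choose 0 0 : ℕ) : ℂ) * (n.choose 0 : ℂ) * (p.choose s : ℂ)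
          * (q.choose s : ℂ) * (((0-0)+(q-s)).factorial : ℂ)
        = (q.factorial : ℂ) * ((-1:ℂ)^s * (p.choose s : ℂ)) := by
      intro s hs
      rw [Finset.mem_range] at hs
      have hs' : s ≤ q := by omega
      have e3 := congrArg (Nat.cast : ℕ → ℂ) (Nat.choose_mul_factorial_mul_factorial hs')
      push_cast at e3
      simp only [Nat.sub_self, zero_add, Nat.factorial_zero, Nat.choose_self,
        Nat.choose_zero_right, Nat.cast_one, one_mul, mul_one]
      linear_combination ((-1:ℂ)^s * (p.choose s : ℂ)) * e3
    rw [sum_congr rfl e1, ← mul_sum]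
    have e4 : ∑ s ∈ range (q+1), (-1:ℂ)^s * (p.choose s:ℂ)
        = ∑ s ∈ range (p+1), (-1:ℂ)^s * (p.choose s:ℂ) := by
      refine (sum_subset (range_subset_range.mpr (by omega)) fun x hx hnx => ?_).symm
      rw [Finset.mem_range] at hx hnx
      rw [Nat.choose_eq_zero_of_lt (by omega)]
      simp
    rw [e4, alt_sum]
    by_cases hp : p = 0
    · subst hp
      have hnq : n = q := by omega
      subst hnq
      simp
    · rw [if_neg hp, mul_zero, if_neg (fun hc => hp hc.1.symm)]
  | succ k ih =>
    intro n p q h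
    cases p with
    | zero =>
      have hn : n = k + 1 + q := by omega
      subst hn
      rw [hS]
      have e1 : ∀ r ∈ range (k+1+1),
          (∑ s ∈ range (q+1), (-1:ℂ)^(r+s) * (r.factorial : ℂ) * (s.factorial : ℂ)
            * ((k+1).choose r : ℂ) * ((k+1+q).choose r : ℂ) * ((Nat.choose 0 s : ℕ) : ℂ)
            * (q.choose s : ℂ) * (((k+1-r)+(q-s)).factorial : ℂ))
          = ((k+1+q).factorial : ℂ) * ((-1:ℂ)^r * ((k+1).choose r : ℂ)) := by
        intro r hr
        rw [Finset.mem_range] at hr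
        rw [Finset.sum_eq_single_of_mem 0 (by simp)
          (fun s _ hs => by rw [Nat.choose_eq_zero_of_lt (Nat.pos_of_ne_zero hs)]; simp)]
        have hrn : r ≤ k+1+q := by omega
        have e3 := congrArg (Nat.cast : ℕ → ℂ)
          (Nat.choose_mul_factorial_mul_factorial hrn)
        push_cast at e3
        rw [show (k+1-r)+(q-0) = (k+1+q)-r from by omega]
        simp only [add_zero, Nat.factorial_zero, Nat.choose_self, Nat.choose_zero_right,
          Nat.cast_one, one_mul, mul_one]
        linear_combination ((-1:ℂ)^r * ((k+1).choose r : ℂ)) * e3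
      rw [sum_congr rfl e1, ← mul_sum, alt_sum]
      simp
    | succ pk =>
      rw [hS_rec k n (pk+1) q h]
      have h' : k + q = n + pk := by omega
      rw [show (pk+1) - 1 = pk from rfl, ih n pk q h']
      by_cases hc : k = pk ∧ n = q
      · obtain ⟨h1, h2⟩ := hc
        subst h1
        subst h2
        rw [if_pos ⟨rfl, rfl⟩, if_pos ⟨rfl, rfl⟩]
        push_cast [Nat.factorial_succ]
        ring
      · rw [if_neg hc, mul_zero, if_neg (fun hc2 => hc ⟨by omega, hc2.2⟩)]

lemma theta_integral (a b : ℕ) :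
    ∫ θ in Set.Ioo (-π) π, Complex.exp (θ * Complex.I)^a * Complex.exp (-(θ * Complex.I))^b
      = if a = b then ((2*π : ℝ) : ℂ) else 0 := by
  rcases eq_or_ne a b with h | h
  · subst h
    rw [if_pos rfl]
    have : ∀ θ : ℝ, Complex.exp (θ * Complex.I)^a * Complex.exp (-(θ * Complex.I))^a = 1 := by
      intro θ
      rw [← mul_pow, ← Complex.exp_add]
      simp
    simp only [this]
    rw [setIntegral_const]
    simp [Real.volume_Ioo, two_mul, ← sub_neg_eq_add]
    rw [max_eq_left (by linarith [pi_pos])]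
    push_cast
    ring
  · rw [if_neg h]
    have hk : ((a:ℤ) - b : ℤ) ≠ 0 := by omega
    have hc : ((a:ℤ) - (b:ℤ) : ℂ) * Complex.I ≠ 0 := by
      apply mul_ne_zero _ Complex.I_ne_zero
      exact_mod_cast hk
    have e1 : ∀ θ : ℝ, Complex.exp (θ * Complex.I)^a * Complex.exp (-(θ * Complex.I))^b
        = Complex.exp ((((a:ℤ) - (b:ℤ) : ℂ) * Complex.I) * θ) := by
      intro θ
      rw [← Complex.exp_nat_mul, ← Complex.exp_nat_mul, ← Complex.exp_add]
      congr 1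
      push_cast
      ring
    simp only [e1]
    rw [← MeasureTheory.integral_Ioc_eq_integral_Ioo,
      ← intervalIntegral.integral_of_le (by linarith [pi_pos]),
      integral_exp_mul_complex hc]
    have e2 : Complex.exp ((((a:ℤ) - (b:ℤ) : ℂ) * Complex.I) * π)
        = ((-1 : ℂ)) ^ ((a:ℤ) - b) := by
      rw [show (((a:ℤ) - (b:ℤ) : ℂ) * Complex.I) * π
          = ((a:ℤ) - (b:ℤ) : ℤ) * (π * Complex.I) from by push_cast; ring,
        Complex.exp_int_mul, Complex.exp_pi_mul_I]
    have e3 : Complex.exp ((((a:ℤ) - (b:ℤ) : ℂ) * Complex.I) * (-π : ℝ))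
        = ((-1 : ℂ)) ^ ((a:ℤ) - b) := by
      rw [show (((a:ℤ) - (b:ℤ) : ℂ) * Complex.I) * ((-π : ℝ) : ℂ)
          = (-((a:ℤ) - (b:ℤ)) : ℤ) * (π * Complex.I) from by push_cast; ring,
        Complex.exp_int_mul, Complex.exp_pi_mul_I, zpow_neg, ← inv_zpow, inv_neg, inv_one]
    rw [e2, e3, sub_self, zero_div]

lemma radial_integral (ρ : ℝ) (hρ : 0 < ρ) (c : ℕ) :
    ∫ r in Ioi (0:ℝ), r ^ (2*c+1) * rexp (-(r^2)/ρ) = ρ^(c+1) * (c.factorial) / 2 := by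
  have hq : (-1:ℝ) < 2*(c:ℝ)+1 := by nlinarith [Nat.cast_nonneg (α := ℝ) c]
  have h := integral_rpow_mul_exp_neg_mul_rpow (p := 2) (q := (2*(c:ℝ)+1)) (b := ρ⁻¹)
    two_pos hq (inv_pos.mpr hρ)
  rw [show ∫ x in Ioi (0:ℝ), x ^ (2*(c:ℝ)+1) * rexp (-ρ⁻¹ * x ^ (2:ℝ))
      = ∫ r in Ioi (0:ℝ), r ^ (2*c+1) * rexp (-(r^2)/ρ) from
    setIntegral_congr_fun measurableSet_Ioi (fun x hx => by
      rw [Set.mem_Ioi] at hx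
      rw [show (2*(c:ℝ)+1) = ((2*c+1 : ℕ):ℝ) from by push_cast; ring, Real.rpow_natCast,
        show (x:ℝ) ^ (2:ℝ) = x^2 from by
          rw [show (2:ℝ) = ((2:ℕ):ℝ) from by norm_num, Real.rpow_natCast]]
      congr 1
      field_simp)] at h
  rw [h, show (2*(c:ℝ)+1+1)/2 = (c:ℝ)+1 from by ring, Real.Gamma_nat_eq_factorial,
    show -(2*(c:ℝ)+1+1)/2 = -((c:ℝ)+1) from by ring,
    Real.rpow_neg (inv_nonneg.mpr hρ.le), Real.inv_rpow hρ.le, inv_inv,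
    show ((c:ℝ)+1) = ((c+1:ℕ):ℝ) from by push_cast; ring, Real.rpow_natCast]
  ring

lemma integral_monomial (ρ : ℝ) (hρ : 0 < ρ) (a b : ℕ) :
    ∫ z : ℂ, ((π * ρ)⁻¹ * rexp (-(Complex.normSq z) / ρ)) • (z ^ a * (starRingEnd ℂ) z ^ b)
      = if a = b then (a.factorial : ℂ) * (ρ:ℂ)^a else 0 := by
  rw [← Complex.integral_comp_polarCoord_symm, polarCoord_target]
  rw [setIntegral_congr_fun (measurableSet_Ioi.prod measurableSet_Ioo)
    (g := fun p : ℝ × ℝ => (((p.1^(a+b+1) * ((π*ρ)⁻¹ * rexp (-(p.1^2)/ρ))) : ℝ) : ℂ) *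
      (Complex.exp (p.2 * Complex.I)^a * Complex.exp (-(p.2 * Complex.I))^b)) ?_]
  · rw [Measure.volume_eq_prod, setIntegral_prod_mul (fun r : ℝ => (((r^(a+b+1) * ((π*ρ)⁻¹ * rexp (-(r^2)/ρ))) : ℝ) : ℂ))
      (fun θ : ℝ => Complex.exp (θ * Complex.I)^a * Complex.exp (-(θ * Complex.I))^b) _ _,
      theta_integral]
    rcases eq_or_ne a b with h | h
    · subst h
      rw [if_pos rfl, if_pos rfl]
      rw [setIntegral_congr_fun measurableSet_Ioi
        (g := fun r : ℝ => (((π*ρ)⁻¹ * (r^(2*a+1) * rexp (-(r^2)/ρ)) : ℝ) : ℂ))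
        (fun r _ => by push_cast; ring)]
      rw [show (∫ x in Ioi (0:ℝ), (((π * ρ)⁻¹ * (x ^ (2 * a + 1) * rexp (-x ^ 2 / ρ)) : ℝ) : ℂ))
          = (((∫ x in Ioi (0:ℝ), (π * ρ)⁻¹ * (x ^ (2 * a + 1) * rexp (-x ^ 2 / ρ))) : ℝ) : ℂ)
        from integral_ofReal (𝕜 := ℂ), integral_const_mul, radial_integral ρ hρ a]
      have hρ' : (ρ:ℂ) ≠ 0 := by exact_mod_cast hρ.ne'
      have hπ' : (π:ℂ) ≠ 0 := by exact_mod_cast Real.pi_ne_zero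
      push_cast
      field_simp
      ring
    · rw [if_neg h, if_neg h, mul_zero]
  · intro p hp
    simp only [Set.mem_prod, Set.mem_Ioi, Set.mem_Ioo] at hp
    have hP : Complex.polarCoord.symm p = (p.1 : ℂ) * Complex.exp (p.2 * Complex.I) := by
      rw [Complex.polarCoord_symm_apply, Complex.exp_mul_I, ← Complex.ofReal_cos,
        ← Complex.ofReal_sin]
    have hconj : (starRingEnd ℂ) (Complex.polarCoord.symm p)
        = (p.1:ℂ) * Complex.exp (-(p.2 * Complex.I)) := by
      rw [hP, map_mul, Complex.conj_ofReal, ← Complex.exp_conj]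
      congr 1
      simp [Complex.conj_ofReal]
    have hns : Complex.normSq (Complex.polarCoord.symm p) = p.1^2 := by
      rw [← Complex.sq_norm, Complex.norm_polarCoord_symm, sq_abs]
    dsimp only
    rw [hns, hconj, hP]
    rw [Complex.real_smul, Complex.real_smul]
    push_cast
    ring

lemma pow_le_factorial_mul_exp {t : ℝ} (ht : 0 ≤ t) (k : ℕ) :
    t^k ≤ (k.factorial : ℝ) * rexp t := by
  have h1 : t^k / k.factorial ≤ rexp t := by
    calc t^k / k.factorial ≤ ∑ i ∈ Finset.range (k+1), t^i / i.factorial :=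
          Finset.single_le_sum (f := fun i => t^i / (i.factorial : ℝ))
            (fun i _ => by positivity) (Finset.self_mem_range_succ k)
      _ ≤ rexp t := Real.sum_le_exp_of_nonneg ht (k+1)
  have hk : (0:ℝ) < k.factorial := by exact_mod_cast k.factorial_pos
  calc t^k = (t^k / k.factorial) * k.factorial := by field_simp
    _ ≤ rexp t * k.factorial := by apply mul_le_mul_of_nonneg_right h1 hk.le
    _ = k.factorial * rexp t := by ring

lemma integrable_gauss_c (b : ℝ) (hb : 0 < b) :
    Integrable (fun v : ℂ => rexp (-b * ‖v‖^2)) := by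
  have h0 := (GaussianFourier.integrable_cexp_neg_mul_sq_norm_add (V := ℂ)
      (b := ((b : ℝ) : ℂ)) (by simpa using hb) 0 (0 : ℂ)).norm
  refine h0.congr (Filter.Eventually.of_forall fun v => ?_)
  simp [Complex.norm_exp, ← Complex.ofReal_pow]

lemma integrable_weighted (ρ : ℝ) (hρ : 0 < ρ) (k : ℕ) (g : ℂ → ℂ) (hg : Continuous g)
    (hb : ∀ z, ‖g z‖ ≤ ‖z‖^k) :
    Integrable (fun z : ℂ => ((π * ρ)⁻¹ * rexp (-(Complex.normSq z) / ρ)) • g z) := by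
  have hcont : Continuous fun z : ℂ =>
      ((π * ρ)⁻¹ * rexp (-(Complex.normSq z) / ρ)) • g z := by
    apply Continuous.fun_smul _ hg
    exact continuous_const.mul (Real.continuous_exp.comp
      ((Complex.continuous_normSq.neg).div_const ρ))
  refine Integrable.mono'
    (g := fun z : ℂ => ((π*ρ)⁻¹ * ((k.factorial : ℝ) * rexp (ρ/2)))
      * rexp (-(2*ρ)⁻¹ * ‖z‖^2))
    ((integrable_gauss_c (2*ρ)⁻¹ (by positivity)).const_mul _)
    hcont.aestronglyMeasurable
    (Filter.Eventually.of_forall fun z => ?_)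
  have hw : (0:ℝ) ≤ (π * ρ)⁻¹ * rexp (-(Complex.normSq z) / ρ) := by
    have := Real.pi_pos
    positivity
  rw [norm_smul, Real.norm_eq_abs, abs_of_nonneg hw]
  have hns : Complex.normSq z = ‖z‖^2 := by
    rw [← Complex.sq_norm]
  rw [hns]
  set t := ‖z‖ with hts
  have ht : 0 ≤ t := norm_nonneg z
  have key : rexp (-(t^2) / ρ) * t^k ≤ ((k.factorial : ℝ) * rexp (ρ/2)) * rexp (-(2*ρ)⁻¹ * t^2) := by
    have h1 : t^k ≤ (k.factorial : ℝ) * rexp t := pow_le_factorial_mul_exp ht k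
    have h2 : rexp (t + (-(t^2)/ρ)) ≤ rexp (ρ/2 + (-(2*ρ)⁻¹ * t^2)) := by
      apply Real.exp_le_exp.mpr
      rw [div_eq_mul_inv, mul_inv]
      nlinarith [mul_nonneg (inv_pos.mpr hρ).le (sq_nonneg (t - ρ)),
        mul_inv_cancel₀ hρ.ne', inv_pos.mpr hρ, sq_nonneg (t - ρ)]
    calc rexp (-(t^2) / ρ) * t^k ≤ rexp (-(t^2) / ρ) * ((k.factorial : ℝ) * rexp t) := by
          apply mul_le_mul_of_nonneg_left h1 (Real.exp_nonneg _)
      _ = (k.factorial : ℝ) * rexp (t + (-(t^2)/ρ)) := by rw [Real.exp_add]; ring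
      _ ≤ (k.factorial : ℝ) * rexp (ρ/2 + (-(2*ρ)⁻¹ * t^2)) := by
          apply mul_le_mul_of_nonneg_left h2 (by positivity)
      _ = ((k.factorial : ℝ) * rexp (ρ/2)) * rexp (-(2*ρ)⁻¹ * t^2) := by
          rw [Real.exp_add]; ring
  calc (π * ρ)⁻¹ * rexp (-(t^2) / ρ) * ‖g z‖
      ≤ (π * ρ)⁻¹ * rexp (-(t^2) / ρ) * t^k := by
        have hπ := Real.pi_pos
        apply mul_le_mul_of_nonneg_left (hb z) (by positivity)
    _ = (π * ρ)⁻¹ * (rexp (-(t^2) / ρ) * t^k) := by ring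
    _ ≤ (π * ρ)⁻¹ * (((k.factorial : ℝ) * rexp (ρ/2)) * rexp (-(2*ρ)⁻¹ * t^2)) := by
        apply mul_le_mul_of_nonneg_left key
        have := Real.pi_pos
        positivity
    _ = (π*ρ)⁻¹ * ((k.factorial : ℝ) * rexp (ρ/2)) * rexp (-(2*ρ)⁻¹ * t^2) := by ring

/-- the family `{(m! n! ρ^{m+n})^{-1/2} J_{m,n}(·,ρ)}` is orthonormal in
`L²(ℂ, μ)`:  `∫ J_{m,n} conj(J_{p,q}) dμ = m! n! ρ^{m+n}` if `(m,n) = (p,q)` and `0` otherwise. -/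
theorem hermiteJ_orthonormal (ρ : ℝ) (hρ : 0 < ρ) (m n p q : ℕ) :
    ∫ z : ℂ, hermiteJ m n z ρ * (starRingEnd ℂ) (hermiteJ p q z ρ) ∂(gaussianMeasureC ρ)
      = if m = p ∧ n = q then (m.factorial : ℂ) * (n.factorial : ℂ) * (ρ : ℂ) ^ (m + n)
        else 0 := by
  have hwpos : ∀ z : ℂ, 0 ≤ (π * ρ)⁻¹ * rexp (-(Complex.normSq z) / ρ) := fun z => by
    have := Real.pi_pos; positivity
  have hwcont : Continuous fun z : ℂ => (π * ρ)⁻¹ * rexp (-(Complex.normSq z) / ρ) :=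
    continuous_const.mul (Real.continuous_exp.comp
      ((Complex.continuous_normSq.neg).div_const ρ))
  have hwmeas : Measurable fun z : ℂ =>
      ((π * ρ)⁻¹ * rexp (-(Complex.normSq z) / ρ)).toNNReal :=
    hwcont.measurable.real_toNNReal
  have hconv : ∫ z : ℂ, hermiteJ m n z ρ * (starRingEnd ℂ) (hermiteJ p q z ρ) ∂(gaussianMeasureC ρ)
      = ∫ z : ℂ, ((π * ρ)⁻¹ * rexp (-(Complex.normSq z) / ρ)) •
          (hermiteJ m n z ρ * (starRingEnd ℂ) (hermiteJ p q z ρ)) := by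
    rw [gaussianMeasureC,
      show (fun z : ℂ => ENNReal.ofReal ((Real.pi * ρ)⁻¹ * Real.exp (-(Complex.normSq z) / ρ)))
        = (fun z : ℂ =>
            ((((π * ρ)⁻¹ * rexp (-(Complex.normSq z) / ρ)).toNNReal : ℝ≥0) : ℝ≥0∞)) from rfl]
    refine (integral_withDensity_eq_integral_smul hwmeas _).trans ?_
    refine integral_congr_ae (Filter.Eventually.of_forall fun z => ?_)
    dsimp only
    rw [NNReal.smul_def, Real.coe_toNNReal _ (hwpos z)]
  rw [hconv]
  have hexpand : (fun z : ℂ => ((π * ρ)⁻¹ * rexp (-(Complex.normSq z) / ρ)) •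
          (hermiteJ m n z ρ * (starRingEnd ℂ) (hermiteJ p q z ρ)))
      = fun z : ℂ => ∑ r ∈ range (min m n + 1), ∑ s ∈ range (min p q + 1),
          ((-1:ℂ)^(r+s) * (r.factorial:ℂ) * (s.factorial:ℂ) * (m.choose r:ℂ) * (n.choose r:ℂ)
            * (p.choose s:ℂ) * (q.choose s:ℂ) * (ρ:ℂ)^(r+s)) *
            (((π * ρ)⁻¹ * rexp (-(Complex.normSq z) / ρ)) •
              (z ^ ((m-r)+(q-s)) * (starRingEnd ℂ) z ^ ((n-r)+(p-s)))) := by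
    funext z
    rw [hermiteJ, hermiteJ, map_sum, Finset.sum_mul_sum, Finset.smul_sum]
    refine sum_congr rfl fun r hr => ?_
    rw [Finset.smul_sum]
    refine sum_congr rfl fun s hs => ?_
    simp only [map_mul, map_pow, map_neg, map_one, map_natCast, Complex.conj_conj,
      Complex.conj_ofReal]
    rw [mul_smul_comm]
    congr 1
    ring
  rw [hexpand]
  have hint : ∀ (A B : ℕ), Integrable (fun z : ℂ =>
      ((π * ρ)⁻¹ * rexp (-(Complex.normSq z) / ρ)) • (z ^ A * (starRingEnd ℂ) z ^ B)) := by
    intro A B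
    refine integrable_weighted ρ hρ (A+B) _ ?_ ?_
    · exact (continuous_pow A).mul (Complex.continuous_conj.pow B)
    · intro z
      rw [norm_mul, norm_pow, norm_pow, RCLike.norm_conj, ← pow_add]
  rw [integral_finset_sum _ (fun r _ => integrable_finset_sum _ (fun s _ =>
    ((hint ((m-r)+(q-s)) ((n-r)+(p-s))).const_mul _)))]
  have hmid : ∀ r ∈ range (min m n + 1),
      (∫ z : ℂ, ∑ s ∈ range (min p q + 1),
        ((-1:ℂ)^(r+s) * (r.factorial:ℂ) * (s.factorial:ℂ) * (m.choose r:ℂ) * (n.choose r:ℂ)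
          * (p.choose s:ℂ) * (q.choose s:ℂ) * (ρ:ℂ)^(r+s)) *
          (((π * ρ)⁻¹ * rexp (-(Complex.normSq z) / ρ)) •
            (z ^ ((m-r)+(q-s)) * (starRingEnd ℂ) z ^ ((n-r)+(p-s)))))
      = ∑ s ∈ range (min p q + 1),
          ((-1:ℂ)^(r+s) * (r.factorial:ℂ) * (s.factorial:ℂ) * (m.choose r:ℂ) * (n.choose r:ℂ)
            * (p.choose s:ℂ) * (q.choose s:ℂ) * (ρ:ℂ)^(r+s)) *
          (if (m-r)+(q-s) = (n-r)+(p-s)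
            then ((((m-r)+(q-s)).factorial : ℂ)) * (ρ:ℂ)^((m-r)+(q-s)) else 0) := by
    intro r _
    rw [integral_finset_sum _ (fun s _ => ((hint ((m-r)+(q-s)) ((n-r)+(p-s))).const_mul _))]
    refine sum_congr rfl fun s _ => ?_
    rw [integral_const_mul, integral_monomial ρ hρ]
  rw [sum_congr rfl hmid]
  by_cases hd : m + q = n + p
  · have step1 : ∀ r ∈ range (min m n + 1), ∀ s ∈ range (min p q + 1),
        ((-1:ℂ)^(r+s) * (r.factorial:ℂ) * (s.factorial:ℂ) * (m.choose r:ℂ) * (n.choose r:ℂ)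
          * (p.choose s:ℂ) * (q.choose s:ℂ) * (ρ:ℂ)^(r+s)) *
          (if (m-r)+(q-s) = (n-r)+(p-s)
            then ((((m-r)+(q-s)).factorial : ℂ)) * (ρ:ℂ)^((m-r)+(q-s)) else 0)
        = (ρ:ℂ)^(m+q) * ((-1:ℂ)^(r+s) * (r.factorial:ℂ) * (s.factorial:ℂ) * (m.choose r:ℂ)
            * (n.choose r:ℂ) * (p.choose s:ℂ) * (q.choose s:ℂ)
            * ((((m-r)+(q-s)).factorial : ℂ))) := by
      intro r hr s hs
      rw [Finset.mem_range] at hr hs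
      have hrm : r ≤ m := le_trans (by omega) (min_le_left m n)
      have hrn : r ≤ n := le_trans (by omega) (min_le_right m n)
      have hsp : s ≤ p := le_trans (by omega) (min_le_left p q)
      have hsq : s ≤ q := le_trans (by omega) (min_le_right p q)
      rw [if_pos (by omega)]
      have hexp : (ρ:ℂ)^(r+s) * (ρ:ℂ)^((m-r)+(q-s)) = (ρ:ℂ)^(m+q) := by
        rw [← pow_add]
        congr 1
        omega
      calc ((-1:ℂ)^(r+s) * (r.factorial:ℂ) * (s.factorial:ℂ) * (m.choose r:ℂ) * (n.choose r:ℂ)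
            * (p.choose s:ℂ) * (q.choose s:ℂ) * (ρ:ℂ)^(r+s)) *
            (((((m-r)+(q-s)).factorial : ℂ)) * (ρ:ℂ)^((m-r)+(q-s)))
          = ((ρ:ℂ)^(r+s) * (ρ:ℂ)^((m-r)+(q-s))) * ((-1:ℂ)^(r+s) * (r.factorial:ℂ)
              * (s.factorial:ℂ) * (m.choose r:ℂ) * (n.choose r:ℂ) * (p.choose s:ℂ)
              * (q.choose s:ℂ) * ((((m-r)+(q-s)).factorial : ℂ))) := by ring
        _ = (ρ:ℂ)^(m+q) * ((-1:ℂ)^(r+s) * (r.factorial:ℂ) * (s.factorial:ℂ) * (m.choose r:ℂ)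
              * (n.choose r:ℂ) * (p.choose s:ℂ) * (q.choose s:ℂ)
              * ((((m-r)+(q-s)).factorial : ℂ))) := by rw [hexp]
    rw [sum_congr rfl (fun r hr => sum_congr rfl (step1 r hr))]
    simp only [← Finset.mul_sum]
    have inner_ext : ∀ r : ℕ, ∑ s ∈ range (min p q + 1),
          ((-1:ℂ)^(r+s) * (r.factorial:ℂ) * (s.factorial:ℂ) * (m.choose r:ℂ)
            * (n.choose r:ℂ) * (p.choose s:ℂ) * (q.choose s:ℂ)
            * ((((m-r)+(q-s)).factorial : ℂ)))
        = ∑ s ∈ range (q + 1),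
            ((-1:ℂ)^(r+s) * (r.factorial:ℂ) * (s.factorial:ℂ) * (m.choose r:ℂ)
              * (n.choose r:ℂ) * (p.choose s:ℂ) * (q.choose s:ℂ)
              * ((((m-r)+(q-s)).factorial : ℂ))) := by
      intro r
      refine sum_subset (range_subset_range.mpr (by omega)) fun s hs hns => ?_
      rw [Finset.mem_range] at hs hns
      have hps : p < s := by omega
      rw [Nat.choose_eq_zero_of_lt hps]
      simp
    rw [sum_congr rfl (fun r _ => inner_ext r)]
    have outer_ext : ∑ r ∈ range (min m n + 1), (∑ s ∈ range (q + 1),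
          ((-1:ℂ)^(r+s) * (r.factorial:ℂ) * (s.factorial:ℂ) * (m.choose r:ℂ)
            * (n.choose r:ℂ) * (p.choose s:ℂ) * (q.choose s:ℂ)
            * ((((m-r)+(q-s)).factorial : ℂ))))
        = ∑ r ∈ range (m + 1), (∑ s ∈ range (q + 1),
            ((-1:ℂ)^(r+s) * (r.factorial:ℂ) * (s.factorial:ℂ) * (m.choose r:ℂ)
              * (n.choose r:ℂ) * (p.choose s:ℂ) * (q.choose s:ℂ)
              * ((((m-r)+(q-s)).factorial : ℂ)))) := by
      refine sum_subset (range_subset_range.mpr (by omega)) fun r hr hnr => ?_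
      rw [Finset.mem_range] at hr hnr
      have hnr' : n < r := by omega
      refine Finset.sum_eq_zero fun s _ => ?_
      rw [Nat.choose_eq_zero_of_lt hnr']
      simp
    rw [outer_ext,
      show ∑ r ∈ range (m + 1), ∑ s ∈ range (q + 1),
          ((-1:ℂ)^(r+s) * (r.factorial:ℂ) * (s.factorial:ℂ) * (m.choose r:ℂ)
            * (n.choose r:ℂ) * (p.choose s:ℂ) * (q.choose s:ℂ)
            * ((((m-r)+(q-s)).factorial : ℂ))) = hS m n p q from rfl]
    rw [hS_eq m n p q hd]
    by_cases hc : m = p ∧ n = q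
    · obtain ⟨h1, h2⟩ := hc
      rw [if_pos ⟨h1, h2⟩, if_pos ⟨h1, h2⟩, show m + q = m + n from by omega]
      ring
    · rw [if_neg hc, if_neg hc, mul_zero]
  · rw [if_neg (fun hc => hd (by omega))]
    refine Finset.sum_eq_zero fun r hr => Finset.sum_eq_zero fun s hs => ?_
    rw [Finset.mem_range] at hr hs
    have hrm : r ≤ m := le_trans (by omega) (min_le_left m n)
    have hrn : r ≤ n := le_trans (by omega) (min_le_right m n)
    have hsp : s ≤ p := le_trans (by omega) (min_le_left p q)
    have hsq : s ≤ q := le_trans (by omega) (min_le_right p q)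
    rw [if_neg (by omega), mul_zero]
end

section
/- For the standard two-dimensional Gaussian measure and z = x + iy, the complex Hermite polynomial J_{m,l−m}(z) := J_{m,l−m}(z,2) expands in products of real Hermite polynomials as J_{m,l−m}(z) = Σ_{k=0}^{l} i^{l−k} (Σ_{r+s=k} C(m,r) C(l−m,s) (−1)^{l−m−s}) H_k(x) H_{l−k}(y), where H_k is the probabilists' Hermite polynomial. -/
open Finset Polynomial

noncomputable def HJcpoly (m n : ℕ) : Polynomial ℂ := (1 + X) ^ m * (X - 1) ^ n

noncomputable def HJcc (m n k : ℕ) : ℂ := (HJcpoly m n).coeff k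

lemma HJcc_eq_sum (m n k : ℕ) :
    HJcc m n k = ∑ r ∈ Finset.range (k + 1),
      (m.choose r : ℂ) * (n.choose (k - r) : ℂ) * (-1 : ℂ) ^ (n - (k - r)) := by
  have hq : (X - 1 : Polynomial ℂ) = X + C (-1) := by
    simp [sub_eq_add_neg]
  rw [HJcc, HJcpoly, coeff_mul, Finset.Nat.sum_antidiagonal_eq_sum_range_succ_mk]
  refine Finset.sum_congr rfl fun r _ => ?_
  rw [coeff_one_add_X_pow, hq, coeff_X_add_C_pow]
  ring

lemma HJcc_eq_zero {m n k : ℕ} (h : m + n < k) : HJcc m n k = 0 := by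
  have hd : (HJcpoly m n).natDegree ≤ m + n := by
    refine le_trans (natDegree_mul_le) (add_le_add ?_ ?_)
    · refine le_trans (natDegree_pow_le) ?_
      have h1 : (1 + X : Polynomial ℂ).natDegree ≤ 1 := by
        simpa using natDegree_add_le (1 : Polynomial ℂ) X
      calc m * (1 + X : Polynomial ℂ).natDegree ≤ m * 1 := Nat.mul_le_mul_left m h1
        _ = m := Nat.mul_one m
    · refine le_trans (natDegree_pow_le) ?_
      have h1 : (X - 1 : Polynomial ℂ).natDegree ≤ 1 := by
        simpa using natDegree_sub_le (X : Polynomial ℂ) 1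
      calc n * (X - 1 : Polynomial ℂ).natDegree ≤ n * 1 := Nat.mul_le_mul_left n h1
        _ = n := Nat.mul_one n
  exact coeff_eq_zero_of_natDegree_lt (lt_of_le_of_lt hd h)

lemma HJcc_succ_left (m n k : ℕ) :
    HJcc (m + 1) n (k + 1) = HJcc m n k + HJcc m n (k + 1) := by
  have : HJcpoly (m + 1) n = X * HJcpoly m n + HJcpoly m n := by
    rw [HJcpoly, HJcpoly, pow_succ]; ring
  simp [HJcc, this, coeff_add, coeff_X_mul, add_comm]

lemma HJcc_zero_left (m n : ℕ) : HJcc (m + 1) n 0 = HJcc m n 0 := by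
  have : HJcpoly (m + 1) n = X * HJcpoly m n + HJcpoly m n := by
    rw [HJcpoly, HJcpoly, pow_succ]; ring
  simp [HJcc, this, coeff_add]

lemma HJcc_succ_right (m n k : ℕ) :
    HJcc m (n + 1) (k + 1) = HJcc m n k - HJcc m n (k + 1) := by
  have : HJcpoly m (n + 1) = X * HJcpoly m n - HJcpoly m n := by
    rw [HJcpoly, HJcpoly, pow_succ]; ring
  simp [HJcc, this, coeff_sub, coeff_X_mul, sub_eq_add_neg, add_comm]

lemma HJcc_zero_right (m n : ℕ) : HJcc m (n + 1) 0 = -HJcc m n 0 := by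
  have : HJcpoly m (n + 1) = X * HJcpoly m n - HJcpoly m n := by
    rw [HJcpoly, HJcpoly, pow_succ]; ring
  simp [HJcc, this, coeff_sub]

lemma HJone_add_X_deriv (m : ℕ) :
    (1 + X) * derivative ((1 + X : Polynomial ℂ) ^ m) = C (m : ℂ) * (1 + X) ^ m := by
  cases m with
  | zero => simp
  | succ s =>
    rw [derivative_pow]
    simp only [derivative_add, derivative_one, derivative_X, zero_add, mul_one,
      Nat.add_sub_cancel]
    rw [pow_succ]
    push_cast
    ring

lemma HJpolyP (m n : ℕ) :
    (1 + X) * derivative (HJcpoly m n) =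
      C ((m : ℂ) + n) * HJcpoly m n + 2 * C (n : ℂ) * HJcpoly m (n - 1) := by
  cases n with
  | zero =>
    simp only [HJcpoly, pow_zero, mul_one, Nat.cast_zero, add_zero, C_0, mul_zero, zero_mul]
    rw [HJone_add_X_deriv]
  | succ s =>
    have hone : derivative (X - 1 : Polynomial ℂ) = 1 := by simp
    have hd : derivative (HJcpoly m (s + 1)) =
        derivative ((1 + X : Polynomial ℂ) ^ m) * (X - 1) ^ (s + 1)
          + (1 + X) ^ m * ((C (s : ℂ) + 1) * (X - 1) ^ s) := by
      rw [HJcpoly, derivative_mul, derivative_pow (X - 1 : Polynomial ℂ) (s + 1), hone,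
        Nat.add_sub_cancel]
      simp only [Nat.cast_add, Nat.cast_one, C_add, C_1]
      ring
    have h1 := HJone_add_X_deriv m
    rw [hd, HJcpoly, HJcpoly, Nat.add_sub_cancel]
    simp only [Nat.cast_add, Nat.cast_one, C_add, C_1]
    calc (1 + X) * (derivative ((1 + X : Polynomial ℂ) ^ m) * (X - 1) ^ (s + 1)
          + (1 + X) ^ m * ((C (s : ℂ) + 1) * (X - 1) ^ s))
        = ((1 + X) * derivative ((1 + X : Polynomial ℂ) ^ m)) * (X - 1) ^ (s + 1)
          + (1 + X) * ((1 + X) ^ m * ((C (s : ℂ) + 1) * (X - 1) ^ s)) := by ring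
      _ = (C (m : ℂ) * (1 + X) ^ m) * (X - 1) ^ (s + 1)
          + (1 + X) * ((1 + X) ^ m * ((C (s : ℂ) + 1) * (X - 1) ^ s)) := by rw [h1]
      _ = _ := by rw [pow_succ]; ring

lemma HJkey (m n j : ℕ) :
    ((j : ℂ) + 1) * HJcc m n (j + 1) - ((m : ℂ) + (n : ℂ) - (j : ℂ)) * HJcc m n j
      = 2 * (n : ℂ) * HJcc m (n - 1) j := by
  have h := congrArg (fun p => coeff p j) (HJpolyP m n)
  simp only [add_mul, one_mul, coeff_add, coeff_C_mul, mul_assoc, coeff_ofNat_mul] at h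
  cases j with
  | zero =>
    rw [coeff_X_mul_zero, coeff_derivative] at h
    simp only [HJcc] at *
    push_cast at h ⊢
    linear_combination h
  | succ j =>
    rw [coeff_X_mul, coeff_derivative, coeff_derivative] at h
    simp only [HJcc] at *
    push_cast at h ⊢
    linear_combination h

lemma HJcc_left_zero (n k : ℕ) : HJcc 0 n k = (-1 : ℂ) ^ (n - k) * (n.choose k : ℂ) := by
  have hq : (X - 1 : Polynomial ℂ) = X + C (-1) := by simp [sub_eq_add_neg]
  rw [HJcc, HJcpoly, pow_zero, one_mul, hq, coeff_X_add_C_pow]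

lemma HJkey0 (n k : ℕ) :
    ((k : ℂ) + 1) * HJcc 0 n (k + 1) + ((n : ℂ) - (k : ℂ)) * HJcc 0 n k = 0 := by
  rcases lt_trichotomy k n with hk | hk | hk
  · rw [HJcc_left_zero, HJcc_left_zero]
    have h1 : n - k = (n - (k + 1)) + 1 := by omega
    have hcast : ((n.choose (k + 1) : ℂ)) * ((k : ℂ) + 1) = (n.choose k : ℂ) * ((n : ℂ) - k) := by
      have := Nat.choose_succ_right_eq n k
      have h2 : ((n - k : ℕ) : ℂ) = (n : ℂ) - k := by
        push_cast [Nat.cast_sub hk.le]; ring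
      calc ((n.choose (k + 1) : ℂ)) * ((k : ℂ) + 1)
          = ((n.choose (k + 1) * (k + 1) : ℕ) : ℂ) := by push_cast; ring
        _ = ((n.choose k * (n - k) : ℕ) : ℂ) := by rw [this]
        _ = (n.choose k : ℂ) * ((n : ℂ) - k) := by push_cast [Nat.cast_sub hk.le]; ring
    rw [h1, pow_succ]
    linear_combination ((-1 : ℂ)) ^ (n - (k + 1)) * hcast
  · subst hk
    have h2 : (k.choose (k + 1) : ℂ) = 0 := by
      rw [Nat.choose_eq_zero_of_lt (by omega)]; simp
    rw [HJcc_left_zero, HJcc_left_zero, h2]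
    simp
  · have h2 : (n.choose (k + 1) : ℂ) = 0 := by
      rw [Nat.choose_eq_zero_of_lt (by omega)]; simp
    have h3 : (n.choose k : ℂ) = 0 := by
      rw [Nat.choose_eq_zero_of_lt (by omega)]; simp
    rw [HJcc_left_zero, HJcc_left_zero, h2, h3]
    simp

lemma HJhermite_deriv (n : ℕ) :
    derivative (hermite (n + 1)) = C ((n : ℤ) + 1) * hermite n := by
  induction n with
  | zero => simp [hermite_one]
  | succ n ih =>
    have hr : derivative (hermite n) = X * hermite n - hermite (n + 1) := by
      rw [hermite_succ]; ring
    rw [hermite_succ (n + 1), derivative_sub, derivative_mul, derivative_X, one_mul, ih,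
      derivative_C_mul, hr]
    simp only [Nat.cast_add, Nat.cast_one, C_add, C_1]
    ring

lemma HJmulH (x : ℝ) (k : ℕ) :
    (x : ℂ) * aeval (x : ℂ) (hermite k) =
      aeval (x : ℂ) (hermite (k + 1)) + (k : ℂ) * aeval (x : ℂ) (hermite (k - 1)) := by
  cases k with
  | zero => simp [hermite_one]
  | succ k =>
    have h : hermite (k + 2) = X * hermite (k + 1) - C ((k : ℤ) + 1) * hermite k := by
      rw [hermite_succ (k + 1), HJhermite_deriv]
    rw [show k + 1 + 1 = k + 2 from rfl, h]
    simp only [map_sub, map_mul, aeval_X, aeval_C, Nat.add_sub_cancel]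
    push_cast
    ring

noncomputable def HJS (m n : ℕ) (x y : ℝ) : ℂ :=
  ∑ k ∈ Finset.range (m + n + 1),
    Complex.I ^ (m + n - k) * HJcc m n k * aeval (x : ℂ) (hermite k) *
      aeval (y : ℂ) (hermite (m + n - k))

lemma HJS_succ_left (m n : ℕ) (x y : ℝ) :
    HJS (m + 1) n x y =
      ((x : ℂ) + Complex.I * y) * HJS m n x y - 2 * (n : ℂ) * HJS m (n - 1) x y := by
  set Hx : ℕ → ℂ := fun k => aeval (x : ℂ) (hermite k) with hHx
  set Hy : ℕ → ℂ := fun k => aeval (y : ℂ) (hermite k) with hHy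
  set L := m + n with hL
  set I := Complex.I with hI
  -- the four pieces
  set A := ∑ k ∈ Finset.range (L + 1), I ^ (L - k) * HJcc m n k * Hx (k + 1) * Hy (L - k) with hA
  set B := ∑ k ∈ Finset.range (L + 1),
    I ^ (L - k) * HJcc m n k * (k : ℂ) * Hx (k - 1) * Hy (L - k) with hB
  set Cs := ∑ k ∈ Finset.range (L + 1),
    I ^ (L - k + 1) * HJcc m n k * Hx k * Hy (L - k + 1) with hC
  set D := ∑ k ∈ Finset.range (L + 1),
    I ^ (L - k + 1) * HJcc m n k * ((L - k : ℕ) : ℂ) * Hx k * Hy (L - k - 1) with hD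
  have hz : ((x : ℂ) + I * y) * HJS m n x y = A + B + Cs + D := by
    rw [HJS, Finset.mul_sum, hA, hB, hC, hD]
    rw [← Finset.sum_add_distrib, ← Finset.sum_add_distrib, ← Finset.sum_add_distrib]
    refine Finset.sum_congr rfl fun k hk => ?_
    have hx1 : (x : ℂ) * Hx k = Hx (k + 1) + (k : ℂ) * Hx (k - 1) := HJmulH x k
    have hy1 : (y : ℂ) * Hy (L - k) = Hy (L - k + 1) + ((L - k : ℕ) : ℂ) * Hy (L - k - 1) :=
      HJmulH y (L - k)
    calc ((x : ℂ) + I * y) * (I ^ (L - k) * HJcc m n k * Hx k * Hy (L - k))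
        = I ^ (L - k) * HJcc m n k * (((x : ℂ) * Hx k) * Hy (L - k))
          + (I ^ (L - k) * I) * HJcc m n k * (Hx k * ((y : ℂ) * Hy (L - k))) := by ring
      _ = _ := by rw [hx1, hy1, pow_succ]; ring
  -- the degree L+1 part
  have hu : ∑ k ∈ Finset.range (L + 1),
      I ^ (L - k) * HJcc m n (k + 1) * Hx (k + 1) * Hy (L - k)
      = ∑ k ∈ Finset.range L, I ^ (L - k) * HJcc m n (k + 1) * Hx (k + 1) * Hy (L - k) := by
    rw [Finset.sum_range_succ, HJcc_eq_zero (by omega : m + n < L + 1)]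
    ring
  have hCs : Cs = (∑ k ∈ Finset.range (L + 1),
      I ^ (L - k) * HJcc m n (k + 1) * Hx (k + 1) * Hy (L - k))
      + I ^ (L + 1) * HJcc m n 0 * Hx 0 * Hy (L + 1) := by
    rw [hC, Finset.sum_range_succ' (fun k => I ^ (L - k + 1) * HJcc m n k * Hx k * Hy (L - k + 1)),
      hu]
    congr 1
    refine Finset.sum_congr rfl fun k hk => ?_
    have hk' : k < L := Finset.mem_range.mp hk
    have e1 : L - (k + 1) + 1 = L - k := by omega
    rw [e1]
  have hAC : HJS (m + 1) n x y = A + Cs := by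
    have hL1 : m + 1 + n = L + 1 := by omega
    rw [HJS, hL1, Finset.sum_range_succ'
      (fun k => I ^ (L + 1 - k) * HJcc (m + 1) n k * Hx k * Hy (L + 1 - k))]
    rw [hCs, hA]
    have : ∀ k ∈ Finset.range (L + 1),
        I ^ (L + 1 - (k + 1)) * HJcc (m + 1) n (k + 1) * Hx (k + 1) * Hy (L + 1 - (k + 1))
        = I ^ (L - k) * HJcc m n k * Hx (k + 1) * Hy (L - k)
          + I ^ (L - k) * HJcc m n (k + 1) * Hx (k + 1) * Hy (L - k) := by
      intro k hk
      rw [Nat.succ_sub_succ, HJcc_succ_left]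
      ring
    rw [Finset.sum_congr rfl this, Finset.sum_add_distrib, Nat.sub_zero, HJcc_zero_left]
    ring
  -- the degree L-1 part
  have hBD : B + D = 2 * (n : ℂ) * (∑ k ∈ Finset.range L,
      I ^ (L - (k + 1)) * HJcc m (n - 1) k * Hx k * Hy (L - (k + 1))) := by
    have hB' : B = ∑ k ∈ Finset.range L,
        I ^ (L - (k + 1)) * HJcc m n (k + 1) * ((k : ℂ) + 1) * Hx k * Hy (L - (k + 1)) := by
      rw [hB, Finset.sum_range_succ'
        (fun k => I ^ (L - k) * HJcc m n k * (k : ℂ) * Hx (k - 1) * Hy (L - k))]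
      simp only [Nat.cast_zero, Nat.cast_add, Nat.cast_one, mul_zero, zero_mul, add_zero]
      refine Finset.sum_congr rfl fun k hk => ?_
      rw [Nat.succ_sub_succ, Nat.sub_zero]
    have hD' : D = ∑ k ∈ Finset.range L,
        (- I ^ (L - (k + 1))) * HJcc m n k * ((m : ℂ) + n - k) * Hx k * Hy (L - (k + 1)) := by
      rw [hD, Finset.sum_range_succ]
      rw [Nat.sub_self, Nat.cast_zero]
      refine .trans (by ring) ?_
      refine Finset.sum_congr rfl fun k hk => ?_
      have hk' : k < L := Finset.mem_range.mp hk
      have e1 : L - k + 1 = (L - (k + 1)) + 2 := by omega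
      have e2 : L - k - 1 = L - (k + 1) := by omega
      have e3 : ((L - k : ℕ) : ℂ) = (m : ℂ) + n - k := by
        rw [Nat.cast_sub (le_of_lt hk'), hL]
        push_cast
        ring
      rw [e1, e2, e3, pow_add]
      simp only [hI, Complex.I_sq]
      ring
    rw [hB', hD', Finset.mul_sum, ← Finset.sum_add_distrib]
    refine Finset.sum_congr rfl fun k hk => ?_
    have hkey := HJkey m n k
    calc I ^ (L - (k + 1)) * HJcc m n (k + 1) * ((k : ℂ) + 1) * Hx k * Hy (L - (k + 1))
        + (- I ^ (L - (k + 1))) * HJcc m n k * ((m : ℂ) + n - k) * Hx k * Hy (L - (k + 1))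
        = I ^ (L - (k + 1)) * (((k : ℂ) + 1) * HJcc m n (k + 1)
            - ((m : ℂ) + (n : ℂ) - (k : ℂ)) * HJcc m n k) * Hx k * Hy (L - (k + 1)) := by ring
      _ = _ := by rw [hkey]; ring
  have hlast : 2 * (n : ℂ) * (∑ k ∈ Finset.range L,
      I ^ (L - (k + 1)) * HJcc m (n - 1) k * Hx k * Hy (L - (k + 1)))
      = 2 * (n : ℂ) * HJS m (n - 1) x y := by
    cases n with
    | zero => simp
    | succ s =>
      congr 1
      rw [HJS]
      have hLs : L = m + s + 1 := by omega
      rw [Nat.add_sub_cancel, hLs]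
      refine Finset.sum_congr rfl fun k hk => ?_
      have hk' : k < m + s + 1 := Finset.mem_range.mp hk
      have e1 : m + s + 1 - (k + 1) = m + s - k := by omega
      rw [e1]
  have h2 : B + D = 2 * (n : ℂ) * HJS m (n - 1) x y := hBD.trans hlast
  rw [hAC, hz]
  linear_combination -h2

lemma HJS_succ_right (n : ℕ) (x y : ℝ) :
    HJS 0 (n + 1) x y = ((x : ℂ) - Complex.I * y) * HJS 0 n x y := by
  set Hx : ℕ → ℂ := fun k => aeval (x : ℂ) (hermite k) with hHx
  set Hy : ℕ → ℂ := fun k => aeval (y : ℂ) (hermite k) with hHy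
  set I := Complex.I with hI
  set A := ∑ k ∈ Finset.range (n + 1), I ^ (n - k) * HJcc 0 n k * Hx (k + 1) * Hy (n - k) with hA
  set B := ∑ k ∈ Finset.range (n + 1),
    I ^ (n - k) * HJcc 0 n k * (k : ℂ) * Hx (k - 1) * Hy (n - k) with hB
  set Cs := ∑ k ∈ Finset.range (n + 1),
    I ^ (n - k + 1) * HJcc 0 n k * Hx k * Hy (n - k + 1) with hC
  set D := ∑ k ∈ Finset.range (n + 1),
    I ^ (n - k + 1) * HJcc 0 n k * ((n - k : ℕ) : ℂ) * Hx k * Hy (n - k - 1) with hD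
  have hS0 : HJS 0 n x y = ∑ k ∈ Finset.range (n + 1),
      I ^ (n - k) * HJcc 0 n k * Hx k * Hy (n - k) := by
    rw [HJS]
    simp only [Nat.zero_add]
    rfl
  have hz : ((x : ℂ) - I * y) * HJS 0 n x y = A + B - Cs - D := by
    rw [hS0, Finset.mul_sum, hA, hB, hC, hD]
    rw [← Finset.sum_add_distrib, ← Finset.sum_sub_distrib, ← Finset.sum_sub_distrib]
    refine Finset.sum_congr rfl fun k hk => ?_
    have hx1 : (x : ℂ) * Hx k = Hx (k + 1) + (k : ℂ) * Hx (k - 1) := HJmulH x k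
    have hy1 : (y : ℂ) * Hy (n - k) = Hy (n - k + 1) + ((n - k : ℕ) : ℂ) * Hy (n - k - 1) :=
      HJmulH y (n - k)
    calc ((x : ℂ) - I * y) * (I ^ (n - k) * HJcc 0 n k * Hx k * Hy (n - k))
        = I ^ (n - k) * HJcc 0 n k * (((x : ℂ) * Hx k) * Hy (n - k))
          - (I ^ (n - k) * I) * HJcc 0 n k * (Hx k * ((y : ℂ) * Hy (n - k))) := by ring
      _ = _ := by rw [hx1, hy1, pow_succ]; ring
  have hu : ∑ k ∈ Finset.range (n + 1),
      I ^ (n - k) * HJcc 0 n (k + 1) * Hx (k + 1) * Hy (n - k)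
      = ∑ k ∈ Finset.range n, I ^ (n - k) * HJcc 0 n (k + 1) * Hx (k + 1) * Hy (n - k) := by
    rw [Finset.sum_range_succ, HJcc_eq_zero (by omega : 0 + n < n + 1)]
    ring
  have hCs : Cs = (∑ k ∈ Finset.range (n + 1),
      I ^ (n - k) * HJcc 0 n (k + 1) * Hx (k + 1) * Hy (n - k))
      + I ^ (n + 1) * HJcc 0 n 0 * Hx 0 * Hy (n + 1) := by
    rw [hC, Finset.sum_range_succ' (fun k => I ^ (n - k + 1) * HJcc 0 n k * Hx k * Hy (n - k + 1)),
      hu]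
    congr 1
    refine Finset.sum_congr rfl fun k hk => ?_
    have hk' : k < n := Finset.mem_range.mp hk
    have e1 : n - (k + 1) + 1 = n - k := by omega
    rw [e1]
  have hAC : HJS 0 (n + 1) x y = A - Cs := by
    rw [HJS]
    simp only [Nat.zero_add]
    rw [Finset.sum_range_succ'
      (fun k => I ^ (n + 1 - k) * HJcc 0 (n + 1) k * Hx k * Hy (n + 1 - k))]
    rw [hCs, hA]
    have : ∀ k ∈ Finset.range (n + 1),
        I ^ (n + 1 - (k + 1)) * HJcc 0 (n + 1) (k + 1) * Hx (k + 1) * Hy (n + 1 - (k + 1))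
        = I ^ (n - k) * HJcc 0 n k * Hx (k + 1) * Hy (n - k)
          - I ^ (n - k) * HJcc 0 n (k + 1) * Hx (k + 1) * Hy (n - k) := by
      intro k hk
      rw [Nat.succ_sub_succ, HJcc_succ_right]
      ring
    rw [Finset.sum_congr rfl this, Finset.sum_sub_distrib, Nat.sub_zero, HJcc_zero_right]
    ring
  have hBD : B - D = 0 := by
    have hB' : B = ∑ k ∈ Finset.range n,
        I ^ (n - (k + 1)) * HJcc 0 n (k + 1) * ((k : ℂ) + 1) * Hx k * Hy (n - (k + 1)) := by
      rw [hB, Finset.sum_range_succ'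
        (fun k => I ^ (n - k) * HJcc 0 n k * (k : ℂ) * Hx (k - 1) * Hy (n - k))]
      simp only [Nat.cast_zero, Nat.cast_add, Nat.cast_one, mul_zero, zero_mul, add_zero]
      refine Finset.sum_congr rfl fun k hk => ?_
      rw [Nat.succ_sub_succ, Nat.sub_zero]
    have hD' : D = ∑ k ∈ Finset.range n,
        (- I ^ (n - (k + 1))) * HJcc 0 n k * ((n : ℂ) - k) * Hx k * Hy (n - (k + 1)) := by
      rw [hD, Finset.sum_range_succ]
      rw [Nat.sub_self, Nat.cast_zero]
      refine .trans (by ring) ?_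
      refine Finset.sum_congr rfl fun k hk => ?_
      have hk' : k < n := Finset.mem_range.mp hk
      have e1 : n - k + 1 = (n - (k + 1)) + 2 := by omega
      have e2 : n - k - 1 = n - (k + 1) := by omega
      have e3 : ((n - k : ℕ) : ℂ) = (n : ℂ) - k := by
        rw [Nat.cast_sub (le_of_lt hk')]
      rw [e1, e2, e3, pow_add]
      simp only [hI, Complex.I_sq]
      ring
    rw [hB', hD', ← Finset.sum_sub_distrib]
    refine Finset.sum_eq_zero fun k hk => ?_
    have hkey := HJkey0 n k
    calc I ^ (n - (k + 1)) * HJcc 0 n (k + 1) * ((k : ℂ) + 1) * Hx k * Hy (n - (k + 1))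
        - (- I ^ (n - (k + 1))) * HJcc 0 n k * ((n : ℂ) - k) * Hx k * Hy (n - (k + 1))
        = I ^ (n - (k + 1)) * (((k : ℂ) + 1) * HJcc 0 n (k + 1)
            + ((n : ℂ) - (k : ℂ)) * HJcc 0 n k) * Hx k * Hy (n - (k + 1)) := by ring
      _ = 0 := by rw [hkey]; ring
  rw [hAC, hz]
  linear_combination -hBD

lemma HJfac (r n : ℕ) :
    (r + 1).factorial * n.choose (r + 1) = n * (r.factorial * (n - 1).choose r) := by
  cases n with
  | zero => simp [Nat.choose_eq_zero_of_lt]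
  | succ s =>
    rw [Nat.factorial_succ, Nat.add_sub_cancel]
    rw [show (r + 1) * r.factorial * Nat.choose (s + 1) (r + 1)
      = r.factorial * (Nat.choose (s + 1) (r + 1) * (r + 1)) from by ring,
      ← Nat.add_one_mul_choose_eq]
    ring

lemma hermiteJ_eq_sum (m n N : ℕ) (h : min m n + 1 ≤ N) (z : ℂ) (ρ : ℝ) :
    hermiteJ m n z ρ = ∑ r ∈ Finset.range N,
      (-1 : ℂ) ^ r * (r.factorial : ℂ) * (m.choose r : ℂ) * (n.choose r : ℂ) *
        z ^ (m - r) * (starRingEnd ℂ z) ^ (n - r) * (ρ : ℂ) ^ r := by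
  rw [hermiteJ]
  refine Finset.sum_subset (Finset.range_subset_range.mpr h) fun r hr hnr => ?_
  have hmin : min m n < r := by
    have h1 : ¬ r < min m n + 1 := fun hc => hnr (Finset.mem_range.mpr hc)
    omega
  rcases min_lt_iff.mp hmin with h' | h' <;>
    simp [Nat.choose_eq_zero_of_lt h']

lemma HJ_zero_left (n : ℕ) (z : ℂ) (ρ : ℝ) :
    hermiteJ 0 n z ρ = (starRingEnd ℂ z) ^ n := by
  rw [hermiteJ]
  simp

lemma HJ_succ_left (m n : ℕ) (z : ℂ) (ρ : ℝ) :
    hermiteJ (m + 1) n z ρ = z * hermiteJ m n z ρ - (ρ : ℂ) * n * hermiteJ m (n - 1) z ρ := by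
  set w := starRingEnd ℂ z with hw
  set N := m + n + 1 with hN
  have h1 : min (m + 1) n + 1 ≤ N + 1 := by have := min_le_left (m + 1) n; omega
  have h2 : min m n + 1 ≤ N + 1 := by have := min_le_left m n; omega
  have h3 : min m (n - 1) + 1 ≤ N := by have := min_le_left m (n - 1); omega
  rw [hermiteJ_eq_sum (m + 1) n (N + 1) h1 z ρ, hermiteJ_eq_sum m n (N + 1) h2 z ρ,
    hermiteJ_eq_sum m (n - 1) N h3 z ρ]
  rw [Finset.sum_range_succ' (fun r => (-1 : ℂ) ^ r * (r.factorial : ℂ) * ((m + 1).choose r : ℂ) *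
      (n.choose r : ℂ) * z ^ (m + 1 - r) * w ^ (n - r) * (ρ : ℂ) ^ r) N,
    Finset.sum_range_succ' (fun r => (-1 : ℂ) ^ r * (r.factorial : ℂ) * (m.choose r : ℂ) *
      (n.choose r : ℂ) * z ^ (m - r) * w ^ (n - r) * (ρ : ℂ) ^ r) N]
  have key : ∀ r ∈ Finset.range N,
      (-1 : ℂ) ^ (r + 1) * ((r + 1).factorial : ℂ) * ((m + 1).choose (r + 1) : ℂ) *
        (n.choose (r + 1) : ℂ) * z ^ (m + 1 - (r + 1)) * w ^ (n - (r + 1)) * (ρ : ℂ) ^ (r + 1)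
      = z * ((-1 : ℂ) ^ (r + 1) * ((r + 1).factorial : ℂ) * (m.choose (r + 1) : ℂ) *
          (n.choose (r + 1) : ℂ) * z ^ (m - (r + 1)) * w ^ (n - (r + 1)) * (ρ : ℂ) ^ (r + 1))
        - (ρ : ℂ) * n * ((-1 : ℂ) ^ r * (r.factorial : ℂ) * (m.choose r : ℂ) *
          ((n - 1).choose r : ℂ) * z ^ (m - r) * w ^ (n - 1 - r) * (ρ : ℂ) ^ r) := by
    intro r hr
    have e1 : m + 1 - (r + 1) = m - r := by omega
    have e2 : n - (r + 1) = n - 1 - r := by omega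
    have hpascal : (((m + 1).choose (r + 1) : ℕ) : ℂ)
        = (m.choose (r + 1) : ℂ) + (m.choose r : ℂ) := by
      rw [Nat.choose_succ_succ]; push_cast; ring
    have hfac : (((r + 1).factorial : ℕ) : ℂ) * (n.choose (r + 1) : ℂ)
        = (n : ℂ) * ((r.factorial : ℂ) * ((n - 1).choose r : ℂ)) := by
      have h := congrArg (Nat.cast : ℕ → ℂ) (HJfac r n)
      push_cast at h
      linear_combination h
    by_cases hrm : r < m
    · have e3 : m - r = m - (r + 1) + 1 := by omega
      rw [e1, e2, e3, pow_succ, hpascal]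
      linear_combination ((-1 : ℂ)) ^ (r + 1) * (m.choose r : ℂ) * (z ^ (m - (r + 1)) * z) *
        w ^ (n - 1 - r) * (ρ : ℂ) ^ (r + 1) * hfac
    · have hz0 : (m.choose (r + 1) : ℂ) = 0 := by
        rw [Nat.choose_eq_zero_of_lt (by omega)]; simp
      rw [e1, e2, hpascal, hz0]
      linear_combination ((-1 : ℂ)) ^ (r + 1) * (m.choose r : ℂ) * z ^ (m - r) *
        w ^ (n - 1 - r) * (ρ : ℂ) ^ (r + 1) * hfac
  rw [Finset.sum_congr rfl key, Finset.sum_sub_distrib]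
  have ha0 : (-1 : ℂ) ^ 0 * ((0 : ℕ).factorial : ℂ) * ((m + 1).choose 0 : ℂ) *
      (n.choose 0 : ℂ) * z ^ (m + 1 - 0) * w ^ (n - 0) * (ρ : ℂ) ^ 0
      = z * ((-1 : ℂ) ^ 0 * ((0 : ℕ).factorial : ℂ) * (m.choose 0 : ℂ) *
      (n.choose 0 : ℂ) * z ^ (m - 0) * w ^ (n - 0) * (ρ : ℂ) ^ 0) := by
    simp [pow_succ]
    ring
  rw [mul_add, Finset.mul_sum, Finset.mul_sum]
  simp only [Nat.sub_zero, ← hw] at ha0 ⊢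
  rw [ha0]
  ring

lemma HJconj (x y : ℝ) :
    starRingEnd ℂ ((x : ℂ) + Complex.I * y) = (x : ℂ) - Complex.I * y := by
  simp [Complex.ext_iff]

lemma HJmain (m n : ℕ) (x y : ℝ) :
    hermiteJ m n ((x : ℂ) + Complex.I * y) 2 = HJS m n x y := by
  induction m generalizing n with
  | zero =>
    induction n with
    | zero =>
      rw [HJ_zero_left, HJS]
      simp [HJcc, HJcpoly]
    | succ s ih =>
      rw [HJ_zero_left, pow_succ, HJconj, mul_comm, ← HJconj, ← HJ_zero_left s _ 2, ih,
        HJconj, ← HJS_succ_right]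
  | succ m ihm =>
    rw [HJ_succ_left m n _ 2, ihm n, ihm (n - 1), HJS_succ_left]
    push_cast
    ring

/-- for `z = x + iy`, the complex Hermite polynomial `J_{m,l−m}(z) = J_{m,l−m}(z,2)`
expands in products of probabilists' real Hermite polynomials as
`J_{m,l−m}(z) = Σ_{k=0}^{l} i^{l−k} (Σ_{r+s=k} C(m,r) C(l−m,s) (−1)^{l−m−s}) H_k(x) H_{l−k}(y)`. -/
theorem hermiteJ_expand_in_real_hermite (l m : ℕ) (hm : m ≤ l) (x y : ℝ) :
    hermiteJ m (l - m) ((x : ℂ) + Complex.I * (y : ℂ)) 2 =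
      ∑ k ∈ Finset.range (l + 1),
        Complex.I ^ (l - k) *
          (∑ r ∈ Finset.range (k + 1),
            (m.choose r : ℂ) * ((l - m).choose (k - r) : ℂ) * (-1 : ℂ) ^ (l - m - (k - r))) *
          (Polynomial.aeval (x : ℂ) (Polynomial.hermite k)) *
          (Polynomial.aeval (y : ℂ) (Polynomial.hermite (l - k))) := by
  rw [HJmain m (l - m) x y, HJS]
  have hl : m + (l - m) = l := by omega
  rw [hl]
  refine Finset.sum_congr rfl fun k hk => ?_
  rw [HJcc_eq_sum]
end

section
/- For z = x + iy, the product of real Hermite polynomials expands in complex Hermite polynomials as H_k(x) H_{l−k}(y) = (i^{l−k} / 2^l) Σ_{m=0}^{l} (Σ_{r+s=m} C(k,r) C(l−k,s) (−1)^s) J_{m,l−m}(z), where J_{m,n}(z) = J_{m,n}(z,2). -/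
open Finset Polynomial

open Complex

noncomputable def Jc (u v : ℂ) (m n : ℕ) : ℂ :=
  ∑ r ∈ Finset.range (min m n + 1),
    (-1 : ℂ) ^ r * (r.factorial : ℂ) * (m.choose r : ℂ) * (n.choose r : ℂ) *
      u ^ (m - r) * v ^ (n - r) * 2 ^ r

lemma Jc_eq (u v : ℂ) (m n N : ℕ) (h : m ≤ N) :
    Jc u v m n = ∑ r ∈ Finset.range (N + 1),
      (-1 : ℂ) ^ r * (r.factorial : ℂ) * (m.choose r : ℂ) * (n.choose r : ℂ) *
        u ^ (m - r) * v ^ (n - r) * 2 ^ r := by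
  rw [Jc]
  apply Finset.sum_subset
  · intro x hx
    simp only [Finset.mem_range] at hx ⊢
    omega
  · intro x hx hx'
    simp only [Finset.mem_range] at hx hx'
    have : m < x ∨ n < x := by omega
    rcases this with h1 | h1
    · rw [Nat.choose_eq_zero_of_lt h1]; push_cast; ring
    · rw [Nat.choose_eq_zero_of_lt h1]; push_cast; ring

lemma Jc_symm (u v : ℂ) (m n : ℕ) : Jc u v m n = Jc v u n m := by
  rw [Jc, Jc, min_comm]
  exact Finset.sum_congr rfl (fun r _ => by ring)

lemma Jc_recL (u v : ℂ) (m n : ℕ) :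
    Jc u v (m + 1) n = u * Jc u v m n - 2 * (n : ℂ) * Jc u v m (n - 1) := by
  rcases n with _ | n
  · simp only [Nat.cast_zero, mul_zero, zero_mul, sub_zero]
    rw [Jc, Jc]
    simp [pow_succ]
    ring
  · rw [Jc_eq u v (m + 1) (n + 1) (m + 1) le_rfl,
        Jc_eq u v m (n + 1) (m + 1) (Nat.le_succ m),
        Nat.add_sub_cancel,
        Jc_eq u v m n m le_rfl,
        Finset.sum_range_succ' _ (m + 1),
        Finset.sum_range_succ' (fun r => (-1 : ℂ) ^ r * (r.factorial : ℂ) * (m.choose r : ℂ) *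
          ((n+1).choose r : ℂ) * u ^ (m - r) * v ^ (n + 1 - r) * 2 ^ r) (m + 1)]
    have h1 : ∀ r ∈ Finset.range (m + 1),
        (-1 : ℂ) ^ (r+1) * ((r+1).factorial : ℂ) * ((m+1).choose (r+1) : ℂ) *
          ((n+1).choose (r+1) : ℂ) * u ^ (m + 1 - (r+1)) * v ^ (n + 1 - (r+1)) * 2 ^ (r+1)
        = u * ((-1 : ℂ) ^ (r+1) * ((r+1).factorial : ℂ) * ((m).choose (r+1) : ℂ) *
          ((n+1).choose (r+1) : ℂ) * u ^ (m - (r+1)) * v ^ (n + 1 - (r+1)) * 2 ^ (r+1))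
          - 2 * ((n : ℂ) + 1) * ((-1 : ℂ) ^ r * (r.factorial : ℂ) * ((m).choose r : ℂ) *
          ((n).choose r : ℂ) * u ^ (m - r) * v ^ (n - r) * 2 ^ r) := by
      intro r hr
      simp only [Finset.mem_range] at hr
      have hch : ((m+1).choose (r+1) : ℂ) = (m.choose r : ℂ) + (m.choose (r+1) : ℂ) := by
        rw [Nat.choose_succ_succ]; push_cast; ring
      have hfac : (((r+1).factorial : ℕ) : ℂ) * ((n+1).choose (r+1) : ℂ)
          = ((n : ℂ) + 1) * (r.factorial : ℂ) * ((n).choose r : ℂ) := by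
        have := Nat.add_one_mul_choose_eq n r
        have h2 : ((r+1).factorial : ℕ) = (r+1) * r.factorial := rfl
        rw [h2]
        push_cast
        have : ((n : ℂ) + 1) * (n.choose r : ℂ) = ((n+1).choose (r+1) : ℂ) * ((r : ℂ) + 1) := by
          exact_mod_cast congrArg (Nat.cast : ℕ → ℂ) this
        linear_combination (-(r.factorial : ℂ)) * this
      have he1 : m + 1 - (r + 1) = m - r := by omega
      have he2 : n + 1 - (r + 1) = n - r := by omega
      rcases Nat.lt_or_ge r m with hlt | hge
      · have he3 : m - r = (m - (r+1)) + 1 := by omega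
        rw [hch, he1, he2, he3, pow_succ]
        linear_combination ((-1:ℂ))^(r+1) * (m.choose r : ℂ) * u^(m-(r+1)) * u * v^(n-r) * 2^(r+1) * hfac
      · have hrm : r = m := by omega
        subst hrm
        rw [hch, he1, he2]
        simp only [Nat.choose_succ_self, Nat.cast_zero, Nat.sub_self, Nat.choose_self, Nat.cast_one]
        linear_combination ((-1:ℂ))^(r+1) * v^(n-r) * 2^(r+1) * hfac
    rw [Finset.sum_congr rfl h1, Finset.sum_sub_distrib, ← Finset.mul_sum, ← Finset.mul_sum]
    push_cast
    simp only [Nat.sub_zero, Nat.choose_zero_right, Nat.cast_one, pow_zero, Nat.factorial_zero]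
    rw [pow_succ]
    ring

lemma Jc_recR (u v : ℂ) (m n : ℕ) :
    Jc u v m (n + 1) = v * Jc u v m n - 2 * (m : ℂ) * Jc u v (m - 1) n := by
  rw [Jc_symm u v m (n+1), Jc_recL, Jc_symm v u n m, Jc_symm v u n (m-1)]

noncomputable def Fk (u v : ℂ) (k n : ℕ) : ℂ :=
  ∑ r ∈ Finset.range (k+1), ∑ s ∈ Finset.range (n+1),
    (k.choose r : ℂ) * (n.choose s : ℂ) * (-1 : ℂ)^s * Jc u v (r+s) (k+n-r-s)

lemma sumSr (u v : ℂ) (k n : ℕ) :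
    ∑ r ∈ Finset.range (k+1), ∑ s ∈ Finset.range (n+1),
      (r : ℂ) * ((k.choose r : ℂ) * (n.choose s : ℂ) * (-1 : ℂ)^s * Jc u v (r+s-1) (k+n-r-s))
    = (k : ℂ) * Fk u v (k-1) n := by
  rcases k with _ | k
  · simp
  · rw [Finset.sum_range_succ' _ (k+1)]
    simp only [Nat.cast_zero, zero_mul, Finset.sum_const_zero, add_zero, Nat.add_sub_cancel]
    rw [Fk, Finset.mul_sum]
    apply Finset.sum_congr rfl
    intro r hr
    rw [Finset.mul_sum]
    apply Finset.sum_congr rfl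
    intro s hs
    simp only [Finset.mem_range] at hr hs
    have he1 : r + 1 + s - 1 = r + s := by omega
    have he2 : k + 1 + n - (r+1) - s = k + n - r - s := by omega
    rw [he1, he2]
    have hc : ((r:ℂ) + 1) * ((k+1).choose (r+1) : ℂ) = ((k:ℂ)+1) * (k.choose r : ℂ) := by
      have := Nat.add_one_mul_choose_eq k r
      have h2 : ((k+1) * k.choose r : ℕ) = ((k+1).choose (r+1) * (r+1) : ℕ) := this
      have h3 : (((k:ℂ)+1) * (k.choose r : ℂ)) = ((k+1).choose (r+1) : ℂ) * ((r:ℂ)+1) := by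
        exact_mod_cast congrArg (Nat.cast : ℕ → ℂ) h2
      linear_combination -h3
    push_cast
    linear_combination ((n.choose s : ℂ) * (-1:ℂ)^s * Jc u v (r+s) (k+n-r-s)) * hc

lemma sumSs (u v : ℂ) (k n : ℕ) :
    ∑ r ∈ Finset.range (k+1), ∑ s ∈ Finset.range (n+1),
      (s : ℂ) * ((k.choose r : ℂ) * (n.choose s : ℂ) * (-1 : ℂ)^s * Jc u v (r+s-1) (k+n-r-s))
    = -(n : ℂ) * Fk u v k (n-1) := by
  rcases n with _ | n
  · simp
  · rw [Nat.add_sub_cancel, Fk, Finset.mul_sum]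
    apply Finset.sum_congr rfl
    intro r hr
    rw [Finset.sum_range_succ' _ (n+1)]
    simp only [Nat.cast_zero, zero_mul, add_zero, Finset.mul_sum]
    apply Finset.sum_congr rfl
    intro s hs
    simp only [Finset.mem_range] at hr hs
    have he1 : r + (s + 1) - 1 = r + s := by omega
    have he2 : k + (n + 1) - r - (s+1) = k + n - r - s := by omega
    rw [he1, he2]
    have hc : ((s:ℂ) + 1) * ((n+1).choose (s+1) : ℂ) = ((n:ℂ)+1) * (n.choose s : ℂ) := by
      have h2 : ((n+1) * n.choose s : ℕ) = ((n+1).choose (s+1) * (s+1) : ℕ) :=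
        Nat.add_one_mul_choose_eq n s
      have h3 : (((n:ℂ)+1) * (n.choose s : ℂ)) = ((n+1).choose (s+1) : ℂ) * ((s:ℂ)+1) := by
        exact_mod_cast congrArg (Nat.cast : ℕ → ℂ) h2
      linear_combination -h3
    push_cast
    linear_combination (-(k.choose r : ℂ) * (-1:ℂ)^s * Jc u v (r+s) (k+n-r-s)) * hc

lemma sumTk (u v : ℂ) (k n : ℕ) :
    ∑ r ∈ Finset.range (k+1), ∑ s ∈ Finset.range (n+1),
      ((k - r : ℕ) : ℂ) * ((k.choose r : ℂ) * (n.choose s : ℂ) * (-1 : ℂ)^s * Jc u v (r+s) (k+n-r-s-1))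
    = (k : ℂ) * Fk u v (k-1) n := by
  rcases k with _ | k
  · simp
  · rw [Finset.sum_range_succ _ (k+1)]
    simp only [Nat.sub_self, Nat.cast_zero, zero_mul, Finset.sum_const_zero, add_zero,
      Nat.add_sub_cancel]
    rw [Fk, Finset.mul_sum]
    apply Finset.sum_congr rfl
    intro r hr
    rw [Finset.mul_sum]
    apply Finset.sum_congr rfl
    intro s hs
    simp only [Finset.mem_range] at hr hs
    have he2 : k + 1 + n - r - s - 1 = k + n - r - s := by omega
    rw [he2]
    have hnat : (k+1) * k.choose r = (k+1).choose r * (k+1 - r) := by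
      rw [Nat.add_one_mul_choose_eq, Nat.choose_succ_right_eq]
    have hc : (((k+1) - r : ℕ) : ℂ) * ((k+1).choose r : ℂ) = ((k:ℂ)+1) * (k.choose r : ℂ) := by
      have h3 : (((k:ℂ)+1) * (k.choose r : ℂ)) = ((k+1).choose r : ℂ) * (((k+1) - r : ℕ) : ℂ) := by
        exact_mod_cast congrArg (Nat.cast : ℕ → ℂ) hnat
      linear_combination -h3
    push_cast at hc ⊢
    linear_combination ((n.choose s : ℂ) * (-1:ℂ)^s * Jc u v (r+s) (k+n-r-s)) * hc

lemma sumTn (u v : ℂ) (k n : ℕ) :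
    ∑ r ∈ Finset.range (k+1), ∑ s ∈ Finset.range (n+1),
      ((n - s : ℕ) : ℂ) * ((k.choose r : ℂ) * (n.choose s : ℂ) * (-1 : ℂ)^s * Jc u v (r+s) (k+n-r-s-1))
    = (n : ℂ) * Fk u v k (n-1) := by
  rcases n with _ | n
  · simp
  · rw [Nat.add_sub_cancel, Fk, Finset.mul_sum]
    apply Finset.sum_congr rfl
    intro r hr
    rw [Finset.sum_range_succ _ (n+1)]
    simp only [Nat.sub_self, Nat.cast_zero, zero_mul, add_zero, Finset.mul_sum]
    apply Finset.sum_congr rfl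
    intro s hs
    simp only [Finset.mem_range] at hr hs
    have he2 : k + (n + 1) - r - s - 1 = k + n - r - s := by omega
    rw [he2]
    have hnat : (n+1) * n.choose s = (n+1).choose s * (n+1 - s) := by
      rw [Nat.add_one_mul_choose_eq, Nat.choose_succ_right_eq]
    have hc : (((n+1) - s : ℕ) : ℂ) * ((n+1).choose s : ℂ) = ((n:ℂ)+1) * (n.choose s : ℂ) := by
      have h3 : (((n:ℂ)+1) * (n.choose s : ℂ)) = ((n+1).choose s : ℂ) * (((n+1) - s : ℕ) : ℂ) := by
        exact_mod_cast congrArg (Nat.cast : ℕ → ℂ) hnat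
      linear_combination -h3
    push_cast at hc ⊢
    linear_combination ((k.choose r : ℂ) * (-1:ℂ)^s * Jc u v (r+s) (k+n-r-s)) * hc

lemma LA (u v : ℂ) (k n : ℕ) :
    ∑ r ∈ Finset.range (k+1), ∑ s ∈ Finset.range (n+1),
      (k.choose r : ℂ) * (n.choose s : ℂ) * (-1 : ℂ)^s * Jc u v (r+s) (k+n-r-s+1)
    = v * Fk u v k n - 2*(k:ℂ)*Fk u v (k-1) n + 2*(n:ℂ)*Fk u v k (n-1) := by
  have e1 : ∑ r ∈ Finset.range (k+1), ∑ s ∈ Finset.range (n+1),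
      (k.choose r : ℂ) * (n.choose s : ℂ) * (-1 : ℂ)^s * Jc u v (r+s) (k+n-r-s+1)
      = v * Fk u v k n
        - 2 * (∑ r ∈ Finset.range (k+1), ∑ s ∈ Finset.range (n+1),
            (r : ℂ) * ((k.choose r : ℂ) * (n.choose s : ℂ) * (-1 : ℂ)^s * Jc u v (r+s-1) (k+n-r-s)))
        - 2 * (∑ r ∈ Finset.range (k+1), ∑ s ∈ Finset.range (n+1),
            (s : ℂ) * ((k.choose r : ℂ) * (n.choose s : ℂ) * (-1 : ℂ)^s * Jc u v (r+s-1) (k+n-r-s))) := by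
    rw [Fk]
    simp only [Finset.mul_sum, ← Finset.sum_sub_distrib]
    apply Finset.sum_congr rfl
    intro r hr
    apply Finset.sum_congr rfl
    intro s hs
    rw [Jc_recR u v (r+s) (k+n-r-s)]
    push_cast
    ring
  rw [e1, sumSr, sumSs]
  ring

lemma LB (u v : ℂ) (k n : ℕ) :
    ∑ r ∈ Finset.range (k+1), ∑ s ∈ Finset.range (n+1),
      (k.choose r : ℂ) * (n.choose s : ℂ) * (-1 : ℂ)^s * Jc u v (r+s+1) (k+n-r-s)
    = u * Fk u v k n - 2*(k:ℂ)*Fk u v (k-1) n - 2*(n:ℂ)*Fk u v k (n-1) := by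
  have e1 : ∑ r ∈ Finset.range (k+1), ∑ s ∈ Finset.range (n+1),
      (k.choose r : ℂ) * (n.choose s : ℂ) * (-1 : ℂ)^s * Jc u v (r+s+1) (k+n-r-s)
      = u * Fk u v k n
        - 2 * (∑ r ∈ Finset.range (k+1), ∑ s ∈ Finset.range (n+1),
            ((k - r : ℕ) : ℂ) * ((k.choose r : ℂ) * (n.choose s : ℂ) * (-1 : ℂ)^s * Jc u v (r+s) (k+n-r-s-1)))
        - 2 * (∑ r ∈ Finset.range (k+1), ∑ s ∈ Finset.range (n+1),
            ((n - s : ℕ) : ℂ) * ((k.choose r : ℂ) * (n.choose s : ℂ) * (-1 : ℂ)^s * Jc u v (r+s) (k+n-r-s-1))) := by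
    rw [Fk]
    simp only [Finset.mul_sum, ← Finset.sum_sub_distrib]
    apply Finset.sum_congr rfl
    intro r hr
    apply Finset.sum_congr rfl
    intro s hs
    simp only [Finset.mem_range] at hr hs
    rw [Jc_recL u v (r+s) (k+n-r-s)]
    have hsplit : ((k+n-r-s : ℕ) : ℂ) = ((k-r : ℕ) : ℂ) + ((n-s : ℕ) : ℂ) := by
      have h : (k+n-r-s : ℕ) = (k-r) + (n-s) := by omega
      rw [h]; push_cast; ring
    rw [hsplit]
    ring
  rw [e1, sumTk, sumTn]
  ring

lemma FrecK (u v : ℂ) (k n : ℕ) :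
    Fk u v (k+1) n = (u+v) * Fk u v k n - 4*(k:ℂ)*Fk u v (k-1) n := by
  have hstep : ∀ r ∈ Finset.range (k+1),
      (∑ s ∈ Finset.range (n+1),
        ((k+1).choose (r+1) : ℂ) * (n.choose s : ℂ) * (-1:ℂ)^s * Jc u v (r+1+s) (k+1+n-(r+1)-s))
      = (∑ s ∈ Finset.range (n+1),
          (k.choose r : ℂ) * (n.choose s : ℂ) * (-1:ℂ)^s * Jc u v (r+s+1) (k+n-r-s))
      + (∑ s ∈ Finset.range (n+1),
          (k.choose (r+1) : ℂ) * (n.choose s : ℂ) * (-1:ℂ)^s * Jc u v (r+1+s) (k+n-(r+1)-s+1)) := by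
    intro r hr
    rw [← Finset.sum_add_distrib]
    apply Finset.sum_congr rfl
    intro s hs
    simp only [Finset.mem_range] at hr hs
    have hp : ((k+1).choose (r+1) : ℂ) = (k.choose r : ℂ) + (k.choose (r+1) : ℂ) := by
      rw [Nat.choose_succ_succ]; push_cast; ring
    have i1 : r+1+s = r+s+1 := by omega
    have i2 : k+1+n-(r+1)-s = k+n-r-s := by omega
    rcases Nat.lt_or_ge r k with hlt | hge
    · have i3 : k+n-(r+1)-s+1 = k+n-r-s := by omega
      rw [hp, i1, i2, i3]; ring
    · have hrk : r = k := by omega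
      subst hrk
      rw [hp, i1, i2]
      simp [Nat.choose_succ_self]
  have htop : (∑ s ∈ Finset.range (n+1),
      (k.choose (k+1) : ℂ) * (n.choose s : ℂ) * (-1:ℂ)^s * Jc u v (k+1+s) (k+n-(k+1)-s+1)) = 0 := by
    simp [Nat.choose_succ_self]
  have hA0 : (∑ s ∈ Finset.range (n+1),
      ((k+1).choose 0 : ℂ) * (n.choose s : ℂ) * (-1:ℂ)^s * Jc u v (0+s) (k+1+n-0-s))
      = ∑ s ∈ Finset.range (n+1),
        (k.choose 0 : ℂ) * (n.choose s : ℂ) * (-1:ℂ)^s * Jc u v (0+s) (k+n-0-s+1) := by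
    apply Finset.sum_congr rfl
    intro s hs
    simp only [Finset.mem_range] at hs
    have : k+1+n-0-s = k+n-0-s+1 := by omega
    rw [this]
    simp
  have key : Fk u v (k+1) n
      = (∑ r ∈ Finset.range (k+1), ∑ s ∈ Finset.range (n+1),
          (k.choose r : ℂ) * (n.choose s : ℂ) * (-1:ℂ)^s * Jc u v (r+s+1) (k+n-r-s))
      + (∑ r ∈ Finset.range (k+1), ∑ s ∈ Finset.range (n+1),
          (k.choose r : ℂ) * (n.choose s : ℂ) * (-1:ℂ)^s * Jc u v (r+s) (k+n-r-s+1)) := by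
    rw [Fk, Finset.sum_range_succ' _ (k+1), Finset.sum_congr rfl hstep, Finset.sum_add_distrib]
    rw [Finset.sum_range_succ (fun r => ∑ s ∈ Finset.range (n+1),
          (k.choose (r+1) : ℂ) * (n.choose s : ℂ) * (-1:ℂ)^s * Jc u v (r+1+s) (k+n-(r+1)-s+1)) k]
    rw [htop, hA0]
    rw [Finset.sum_range_succ' (fun r => ∑ s ∈ Finset.range (n+1),
          (k.choose r : ℂ) * (n.choose s : ℂ) * (-1:ℂ)^s * Jc u v (r+s) (k+n-r-s+1)) k]
    ring
  rw [key, LA, LB]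
  ring

lemma FrecN (u v : ℂ) (k n : ℕ) :
    Fk u v k (n+1) = (v-u) * Fk u v k n + 4*(n:ℂ)*Fk u v k (n-1) := by
  have hrow : ∀ r ∈ Finset.range (k+1),
      (∑ s ∈ Finset.range (n+1+1),
        (k.choose r : ℂ) * ((n+1).choose s : ℂ) * (-1:ℂ)^s * Jc u v (r+s) (k+(n+1)-r-s))
      = (∑ s ∈ Finset.range (n+1),
          (k.choose r : ℂ) * (n.choose s : ℂ) * (-1:ℂ)^s * Jc u v (r+s) (k+n-r-s+1))
      - (∑ s ∈ Finset.range (n+1),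
          (k.choose r : ℂ) * (n.choose s : ℂ) * (-1:ℂ)^s * Jc u v (r+s+1) (k+n-r-s)) := by
    intro r hr
    simp only [Finset.mem_range] at hr
    rw [Finset.sum_range_succ' _ (n+1)]
    rw [Finset.sum_range_succ' (fun s => (k.choose r : ℂ) * (n.choose s : ℂ) * (-1:ℂ)^s *
          Jc u v (r+s) (k+n-r-s+1)) n]
    have hshift : ∀ s ∈ Finset.range (n+1),
        (k.choose r : ℂ) * ((n+1).choose (s+1) : ℂ) * (-1:ℂ)^(s+1) * Jc u v (r+(s+1)) (k+(n+1)-r-(s+1))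
        = (k.choose r : ℂ) * (n.choose (s+1) : ℂ) * (-1:ℂ)^(s+1) * Jc u v (r+(s+1)) (k+n-r-(s+1)+1)
          - (k.choose r : ℂ) * (n.choose s : ℂ) * (-1:ℂ)^s * Jc u v (r+s+1) (k+n-r-s) := by
      intro s hs
      simp only [Finset.mem_range] at hs
      have hp : (((n+1)).choose (s+1) : ℂ) = (n.choose s : ℂ) + (n.choose (s+1) : ℂ) := by
        rw [Nat.choose_succ_succ]; push_cast; ring
      have i1 : r+(s+1) = r+s+1 := by omega
      have i2 : k+(n+1)-r-(s+1) = k+n-r-s := by omega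
      rcases Nat.lt_or_ge s n with hlt | hge
      · have i3 : k+n-r-(s+1)+1 = k+n-r-s := by omega
        rw [hp, i1, i2, i3]
        ring
      · have hsn : s = n := by omega
        subst hsn
        rw [hp, i1, i2]
        simp [Nat.choose_succ_self]
        ring
    rw [Finset.sum_congr rfl hshift, Finset.sum_sub_distrib]
    rw [Finset.sum_range_succ (fun s => (k.choose r : ℂ) * (n.choose (s+1) : ℂ) * (-1:ℂ)^(s+1) *
          Jc u v (r+(s+1)) (k+n-r-(s+1)+1)) n]
    simp only [Nat.choose_succ_self, Nat.cast_zero, zero_mul, mul_zero, zero_mul, add_zero]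
    have h0 : (k.choose r : ℂ) * ((n+1).choose 0 : ℂ) * (-1:ℂ)^0 * Jc u v r (k+(n+1)-r-0)
        = (k.choose r : ℂ) * (n.choose 0 : ℂ) * (-1:ℂ)^0 * Jc u v r (k+n-r-0+1) := by
      have : k+(n+1)-r-0 = k+n-r-0+1 := by omega
      rw [this]; simp
    rw [h0]
    ring
  have key : Fk u v k (n+1)
      = (∑ r ∈ Finset.range (k+1), ∑ s ∈ Finset.range (n+1),
          (k.choose r : ℂ) * (n.choose s : ℂ) * (-1:ℂ)^s * Jc u v (r+s) (k+n-r-s+1))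
      - (∑ r ∈ Finset.range (k+1), ∑ s ∈ Finset.range (n+1),
          (k.choose r : ℂ) * (n.choose s : ℂ) * (-1:ℂ)^s * Jc u v (r+s+1) (k+n-r-s)) := by
    rw [Fk, Finset.sum_congr rfl hrow, Finset.sum_sub_distrib]
  rw [key, LA, LB]
  ring

lemma derivative_hermite' (n : ℕ) :
    derivative (hermite n) = n • hermite (n-1) := by
  induction n with
  | zero => simp [hermite_zero]
  | succ n ih =>
    rw [hermite_succ n, derivative_sub, derivative_mul, derivative_X, one_mul, ih,
        derivative_smul]
    rcases n with _ | m
    · simp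
    · rw [Nat.add_sub_cancel, add_sub_assoc, mul_smul_comm, ← smul_sub, ← hermite_succ,
        Nat.add_sub_cancel, succ_nsmul (hermite (m+1)) (m+1)]
      abel

lemma aeval_hermite_rec (x : ℂ) (k : ℕ) :
    (aeval x (hermite (k+1)) : ℂ) = x * aeval x (hermite k) - (k:ℂ) * aeval x (hermite (k-1)) := by
  rcases k with _ | k
  · simp [hermite_one, hermite_zero]
  · rw [hermite_succ, map_sub, map_mul, aeval_X, derivative_hermite' (k+1), map_nsmul,
        Nat.add_sub_cancel, nsmul_eq_mul]

lemma Fk_eq (x y : ℂ) (k n : ℕ) :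
    Fk (x + Complex.I*y) (x - Complex.I*y) k n
      = 2^(k+n) * (-Complex.I)^n * (aeval x (hermite k)) * (aeval y (hermite n)) := by
  have h00 : Fk (x + Complex.I*y) (x - Complex.I*y) 0 0 = 1 := by
    simp [Fk, Jc]
  have hbase : ∀ n, Fk (x + Complex.I*y) (x - Complex.I*y) 0 n
      = 2^(0+n) * (-Complex.I)^n * (aeval x (hermite 0)) * (aeval y (hermite n)) := by
    intro n
    induction n using Nat.twoStepInduction with
    | zero =>
      rw [h00]
      simp [hermite_zero]
    | one =>
      have h := FrecN (x + Complex.I*y) (x - Complex.I*y) 0 0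
      rw [show Fk (x + Complex.I*y) (x - Complex.I*y) 0 1 = _ from h, h00]
      simp [hermite_one, hermite_zero]
      ring
    | more n ih1 ih2 =>
      rw [show (n+2) = (n+1)+1 from rfl, FrecN _ _ 0 (n+1), Nat.add_sub_cancel, ih2, ih1,
        aeval_hermite_rec y (n+1), Nat.add_sub_cancel]
      have hI : (-Complex.I)^(n+1+1) = -((-Complex.I)^n) := by
        rw [pow_succ, pow_succ, mul_assoc, neg_mul_neg, Complex.I_mul_I]
        ring
      rw [hI, pow_succ]
      push_cast
      ring_nf
      rw [Complex.I_sq]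
      ring
  induction k using Nat.twoStepInduction with
  | zero => exact hbase n
  | one =>
    rw [show Fk (x + Complex.I*y) (x - Complex.I*y) 1 n = _ from FrecK _ _ 0 n, hbase n]
    simp [hermite_one, hermite_zero]
    ring
  | more k ih1 ih2 =>
    rw [show (k+2) = (k+1)+1 from rfl, FrecK _ _ (k+1) n, Nat.add_sub_cancel, ih2, ih1,
      aeval_hermite_rec x (k+1), Nat.add_sub_cancel]
    push_cast
    ring

lemma tri (g : ℕ → ℕ → ℂ) (L : ℕ) :
    ∑ m ∈ Finset.range (L+1), ∑ r ∈ Finset.range (m+1), g r (m-r)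
    = ∑ r ∈ Finset.range (L+1), ∑ s ∈ Finset.range (L+1-r), g r s := by
  induction L with
  | zero => simp
  | succ L ih =>
    rw [Finset.sum_range_succ, ih,
      Finset.sum_range_succ (fun r => ∑ s ∈ Finset.range (L+1+1-r), g r s) (L+1),
      Finset.sum_range_succ (fun r => g r (L+1-r)) (L+1)]
    simp only [Nat.sub_self, Nat.add_sub_cancel_left]
    rw [← add_assoc, ← Finset.sum_add_distrib]
    rw [Finset.sum_range_one]
    congr 1
    apply Finset.sum_congr rfl
    intro r hr
    simp only [Finset.mem_range] at hr
    have h2 : L+1+1-r = (L+1-r)+1 := by omega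
    rw [h2, Finset.sum_range_succ]

lemma hermiteJ_eq_Jc (m n : ℕ) (z : ℂ) : hermiteJ m n z 2 = Jc z ((starRingEnd ℂ) z) m n := by
  unfold hermiteJ Jc
  norm_cast

/-- for `z = x + iy`, the product of probabilists' Hermite polynomials expands as
`H_k(x) H_{l−k}(y) = (i^{l−k}/2^l) Σ_{m=0}^{l} (Σ_{r+s=m} C(k,r) C(l−k,s) (−1)^s) J_{m,l−m}(z)`,
where `J_{m,n}(z) = J_{m,n}(z,2)`. -/
theorem real_hermite_expand_in_hermiteJ (l k : ℕ) (hk : k ≤ l) (x y : ℝ) :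
    (Polynomial.aeval (x : ℂ) (Polynomial.hermite k)) *
      (Polynomial.aeval (y : ℂ) (Polynomial.hermite (l - k))) =
    Complex.I ^ (l - k) / 2 ^ l *
      ∑ m ∈ Finset.range (l + 1),
        (∑ r ∈ Finset.range (m + 1),
          (k.choose r : ℂ) * ((l - k).choose (m - r) : ℂ) * (-1 : ℂ) ^ (m - r)) *
        hermiteJ m (l - m) ((x : ℂ) + Complex.I * (y : ℂ)) 2 := by
  obtain ⟨n, rfl⟩ : ∃ n, l = k + n := ⟨l - k, by omega⟩
  simp only [Nat.add_sub_cancel_left]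
  have hconj : (starRingEnd ℂ) ((x : ℂ) + Complex.I * (y : ℂ)) = (x : ℂ) - Complex.I * (y : ℂ) := by
    simp [map_add, map_mul, Complex.conj_ofReal, Complex.conj_I]
    ring
  have hJ : ∀ m mm, hermiteJ m mm ((x : ℂ) + Complex.I * (y : ℂ)) 2
      = Jc ((x : ℂ) + Complex.I * (y : ℂ)) ((x : ℂ) - Complex.I * (y : ℂ)) m mm := by
    intro m mm
    rw [hermiteJ_eq_Jc, hconj]
  simp only [hJ]
  set u : ℂ := (x : ℂ) + Complex.I * (y : ℂ) with hu
  set v : ℂ := (x : ℂ) - Complex.I * (y : ℂ) with hv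
  have hsum : ∑ m ∈ Finset.range (k + n + 1),
        (∑ r ∈ Finset.range (m + 1),
          (k.choose r : ℂ) * (n.choose (m - r) : ℂ) * (-1 : ℂ) ^ (m - r)) *
        Jc u v m (k + n - m)
      = Fk u v k n := by
    have e1 : ∑ m ∈ Finset.range (k + n + 1),
        (∑ r ∈ Finset.range (m + 1),
          (k.choose r : ℂ) * (n.choose (m - r) : ℂ) * (-1 : ℂ) ^ (m - r)) *
        Jc u v m (k + n - m)
        = ∑ m ∈ Finset.range (k + n + 1), ∑ r ∈ Finset.range (m + 1),
            (k.choose r : ℂ) * (n.choose (m-r) : ℂ) * (-1 : ℂ)^(m-r) * Jc u v (r+(m-r)) (k+n-r-(m-r)) := by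
      apply Finset.sum_congr rfl
      intro m hm
      simp only [Finset.mem_range] at hm
      rw [Finset.sum_mul]
      apply Finset.sum_congr rfl
      intro r hr
      simp only [Finset.mem_range] at hr
      have i1 : r + (m-r) = m := by omega
      have i2 : k+n-r-(m-r) = k+n-m := by omega
      rw [i1, i2]
    rw [e1, tri (fun r s => (k.choose r : ℂ) * (n.choose s : ℂ) * (-1 : ℂ)^s * Jc u v (r+s) (k+n-r-s)) (k+n)]
    rw [Fk]
    have step1 : ∑ r ∈ Finset.range (k+n+1), ∑ s ∈ Finset.range (k+n+1-r),
          (k.choose r : ℂ) * (n.choose s : ℂ) * (-1 : ℂ)^s * Jc u v (r+s) (k+n-r-s)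
        = ∑ r ∈ Finset.range (k+1), ∑ s ∈ Finset.range (k+n+1-r),
          (k.choose r : ℂ) * (n.choose s : ℂ) * (-1 : ℂ)^s * Jc u v (r+s) (k+n-r-s) := by
      refine (Finset.sum_subset ?_ ?_).symm
      · intro r hr
        simp only [Finset.mem_range] at hr ⊢
        omega
      · intro r hr hr'
        simp only [Finset.mem_range] at hr hr'
        apply Finset.sum_eq_zero
        intro s hs
        rw [Nat.choose_eq_zero_of_lt (by omega : k < r)]
        push_cast
        ring
    rw [step1]
    apply Finset.sum_congr rfl
    intro r hr
    simp only [Finset.mem_range] at hr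
    refine (Finset.sum_subset ?_ ?_).symm
    · intro s hs
      simp only [Finset.mem_range] at hs ⊢
      omega
    · intro s hs hs'
      simp only [Finset.mem_range] at hs hs'
      rw [Nat.choose_eq_zero_of_lt (by omega : n < s)]
      push_cast
      ring
  rw [hsum, Fk_eq x y k n]
  have hins2 : (Complex.I:ℂ)^(n*2) * (-1:ℂ)^n = 1 := by
    rw [mul_comm n 2, pow_mul, Complex.I_sq, ← mul_pow]
    norm_num
  have h2 : ((2:ℂ))^(k+n) ≠ 0 := pow_ne_zero _ two_ne_zero
  field_simp
  linear_combination (-((aeval (x:ℂ) (hermite k)) * (aeval (y:ℂ) (hermite n)))) * hins2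
end

section
/- If x(t) solves the linear SDE dy = y(\bar{λ} dx + λ d\bar{x}), y₀ = 1, for a conformal continuous local martingale x with x₀ = 0, then y_t = exp(\bar{λ} x_t + λ \bar{x}_t − |λ|² ⟨x, \bar{x}⟩_t). Equivalently (deterministic version): for fixed complex z and real ρ ≥ 0, the function f(λ) = exp(λ\bar{z} + \bar{λ}z − ρ|λ|²) has Taylor coefficients (in \bar{λ}^m λ^n) equal to J_{m,n}(z,ρ)/(m! n!): for every λ ∈ ℂ, exp(λ\bar{z} + \bar{λ}z − ρ|λ|²) = Σ_{m,n≥0} (\bar{λ}^m λ^n)/(m! n!) J_{m,n}(z,ρ), with absolute convergence of the double series. -/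
open Finset

lemma hasSum_exp_div (w : ℂ) : HasSum (fun n => w ^ n / n.factorial) (Complex.exp w) := by
  rw [Complex.exp_eq_exp_ℂ]
  exact NormedSpace.expSeries_div_hasSum_exp w

lemma key_term (l z : ℂ) (ρ : ℝ) (m n r : ℕ) (hm : r ≤ m) (hn : r ≤ n) :
    (starRingEnd ℂ l * z) ^ (m - r) / ((m - r).factorial : ℂ) *
      ((l * starRingEnd ℂ z) ^ (n - r) / ((n - r).factorial : ℂ)) *
      ((-(ρ : ℂ) * (l * starRingEnd ℂ l)) ^ r / (r.factorial : ℂ)) =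
    (starRingEnd ℂ l) ^ m * l ^ n / ((m.factorial : ℂ) * (n.factorial : ℂ)) *
      ((-1 : ℂ) ^ r * (r.factorial : ℂ) * (m.choose r : ℂ) * (n.choose r : ℂ) *
        z ^ (m - r) * (starRingEnd ℂ z) ^ (n - r) * (ρ : ℂ) ^ r) := by
  have h1 : (m.choose r : ℂ) * r.factorial * (m - r).factorial = m.factorial := by
    exact_mod_cast congrArg (Nat.cast : ℕ → ℂ) (Nat.choose_mul_factorial_mul_factorial hm)
  have h2 : (n.choose r : ℂ) * r.factorial * (n - r).factorial = n.factorial := by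
    exact_mod_cast congrArg (Nat.cast : ℕ → ℂ) (Nat.choose_mul_factorial_mul_factorial hn)
  have hlm : (starRingEnd ℂ l) ^ (m - r) * (starRingEnd ℂ l) ^ r = (starRingEnd ℂ l) ^ m := by
    rw [← pow_add, Nat.sub_add_cancel hm]
  have hln : l ^ (n - r) * l ^ r = l ^ n := by
    rw [← pow_add, Nat.sub_add_cancel hn]
  have fm : ((m - r).factorial : ℂ) ≠ 0 := Nat.cast_ne_zero.2 (Nat.factorial_ne_zero _)
  have fn : ((n - r).factorial : ℂ) ≠ 0 := Nat.cast_ne_zero.2 (Nat.factorial_ne_zero _)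
  have fr : ((r).factorial : ℂ) ≠ 0 := Nat.cast_ne_zero.2 (Nat.factorial_ne_zero _)
  have fM : ((m).factorial : ℂ) ≠ 0 := Nat.cast_ne_zero.2 (Nat.factorial_ne_zero _)
  have fN : ((n).factorial : ℂ) ≠ 0 := Nat.cast_ne_zero.2 (Nat.factorial_ne_zero _)
  field_simp
  rw [← h1, ← h2, ← hlm, ← hln]
  ring


set_option maxHeartbeats 1000000 in
/-- deterministic generating-function identity: for every `λ ∈ ℂ`,
`exp(λ z̄ + λ̄ z − ρ|λ|²) = Σ_{m,n≥0} (λ̄^m λ^n)/(m! n!) J_{m,n}(z,ρ)`, the double series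
converging absolutely. -/
theorem hermiteJ_generating_function (z : ℂ) (ρ : ℝ) (hρ : 0 ≤ ρ) (l : ℂ) :
    HasSum
      (fun p : ℕ × ℕ =>
        (starRingEnd ℂ l) ^ p.1 * l ^ p.2 / ((p.1.factorial : ℂ) * (p.2.factorial : ℂ))
          * hermiteJ p.1 p.2 z ρ)
      (Complex.exp (l * starRingEnd ℂ z + starRingEnd ℂ l * z
        - (ρ : ℂ) * (‖l‖ : ℂ) ^ 2)) ∧
    Summable
      (fun p : ℕ × ℕ =>
        ‖(starRingEnd ℂ l) ^ p.1 * l ^ p.2 / ((p.1.factorial : ℂ) * (p.2.factorial : ℂ))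
          * hermiteJ p.1 p.2 z ρ‖) := by
  set a : ℂ := starRingEnd ℂ l * z with ha
  set b : ℂ := l * starRingEnd ℂ z with hb
  set c : ℂ := -(ρ : ℂ) * (l * starRingEnd ℂ l) with hc
  -- the exponent
  have habs : (ρ : ℂ) * (‖l‖ : ℂ) ^ 2 = (ρ : ℂ) * (l * starRingEnd ℂ l) := by
    congr 1
    rw [Complex.mul_conj, ← Complex.sq_norm]
    push_cast
    ring
  have hexp : Complex.exp (l * starRingEnd ℂ z + starRingEnd ℂ l * z
      - (ρ : ℂ) * (‖l‖ : ℂ) ^ 2) = Complex.exp a * Complex.exp b * Complex.exp c := by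
    rw [← Complex.exp_add, ← Complex.exp_add]
    congr 1
    rw [habs, hc, ha, hb]; ring
  -- triple series
  set G : (ℕ × ℕ) × ℕ → ℂ := fun q =>
    a ^ q.1.1 / (q.1.1.factorial : ℂ) * (b ^ q.1.2 / (q.1.2.factorial : ℂ)) *
      (c ^ q.2 / (q.2.factorial : ℂ)) with hG
  have sa := NormedSpace.norm_expSeries_div_summable a
  have sb := NormedSpace.norm_expSeries_div_summable b
  have sc := NormedSpace.norm_expSeries_div_summable c
  have sab : Summable fun p : ℕ × ℕ => ‖a ^ p.1 / (p.1.factorial : ℂ) *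
      (b ^ p.2 / (p.2.factorial : ℂ))‖ :=
    Summable.mul_norm (f := fun n : ℕ => a ^ n / (n.factorial : ℂ))
      (g := fun n : ℕ => b ^ n / (n.factorial : ℂ)) sa sb
  have sG : Summable fun q => ‖G q‖ :=
    Summable.mul_norm
      (f := fun p : ℕ × ℕ => a ^ p.1 / (p.1.factorial : ℂ) * (b ^ p.2 / (p.2.factorial : ℂ)))
      (g := fun n : ℕ => c ^ n / (n.factorial : ℂ)) sab sc
  have hGsum : HasSum G (Complex.exp a * Complex.exp b * Complex.exp c) := by
    have h1 : HasSum (fun p : ℕ × ℕ => a ^ p.1 / (p.1.factorial : ℂ) *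
        (b ^ p.2 / (p.2.factorial : ℂ))) (Complex.exp a * Complex.exp b) :=
      HasSum.mul (f := fun n : ℕ => a ^ n / (n.factorial : ℂ))
        (g := fun n : ℕ => b ^ n / (n.factorial : ℂ))
        (hasSum_exp_div a) (hasSum_exp_div b) sab.of_norm
    exact HasSum.mul
      (f := fun p : ℕ × ℕ => a ^ p.1 / (p.1.factorial : ℂ) * (b ^ p.2 / (p.2.factorial : ℂ)))
      (g := fun n : ℕ => c ^ n / (n.factorial : ℂ)) h1 (hasSum_exp_div c) sG.of_norm
  -- reindex
  set ψ : (ℕ × ℕ) × ℕ → (ℕ × ℕ) × ℕ := fun q => ((q.1.1 + q.2, q.1.2 + q.2), q.2) with hψ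
  have hinj : Function.Injective ψ := by
    rintro ⟨⟨i, j⟩, r⟩ ⟨⟨i', j'⟩, r'⟩ h
    simp only [hψ, Prod.mk.injEq] at h
    obtain ⟨⟨h1, h2⟩, h3⟩ := h
    subst h3
    simp_all [Nat.add_right_cancel_iff]
  set G' : (ℕ × ℕ) × ℕ → ℂ := fun q =>
    if q.2 ≤ min q.1.1 q.1.2 then
      a ^ (q.1.1 - q.2) / ((q.1.1 - q.2).factorial : ℂ) *
        (b ^ (q.1.2 - q.2) / ((q.1.2 - q.2).factorial : ℂ)) *
        (c ^ q.2 / (q.2.factorial : ℂ))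
    else 0 with hG'
  have hcomp : ∀ q, G' (ψ q) = G q := by
    rintro ⟨⟨i, j⟩, r⟩
    simp only [hG', hψ, hG]
    rw [if_pos (by simp)]
    simp
  have hzero : ∀ q, q ∉ Set.range ψ → G' q = 0 := by
    rintro ⟨⟨m, n⟩, r⟩ hq
    by_contra h
    apply hq
    have hr : r ≤ min m n := by
      by_contra hr
      exact h (if_neg hr)
    exact ⟨((m - r, n - r), r), by
      simp only [hψ]
      have h1 : m - r + r = m := Nat.sub_add_cancel (le_trans hr (min_le_left _ _))
      have h2 : n - r + r = n := Nat.sub_add_cancel (le_trans hr (min_le_right _ _))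
      simp [h1, h2]⟩
  have hG'sum : HasSum G' (Complex.exp a * Complex.exp b * Complex.exp c) := by
    rw [← hinj.hasSum_iff hzero]
    exact hGsum.congr_fun fun q => (hcomp q).symm ▸ rfl
  have sG' : Summable fun q => ‖G' q‖ := by
    rw [← hinj.summable_iff (fun q hq => by rw [hzero q hq, norm_zero])]
    apply sG.congr
    intro q
    rw [Function.comp_apply, hcomp]
  -- fiberwise sums
  set F : ℕ × ℕ → ℂ := fun p =>
    (starRingEnd ℂ l) ^ p.1 * l ^ p.2 / ((p.1.factorial : ℂ) * (p.2.factorial : ℂ))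
      * hermiteJ p.1 p.2 z ρ with hF
  have hfiber : ∀ p : ℕ × ℕ, HasSum (fun r => G' (p, r)) (F p) := by
    rintro ⟨m, n⟩
    have hz : ∀ r ∉ Finset.range (min m n + 1), G' ((m, n), r) = 0 := by
      intro r hr
      rw [Finset.mem_range, Nat.lt_add_one_iff, not_le] at hr
      exact if_neg (not_le.2 hr)
    have := hasSum_sum_of_ne_finset_zero (L := SummationFilter.unconditional ℕ) hz
    convert this using 1
    simp only [hF, hermiteJ, Finset.mul_sum]
    apply Finset.sum_congr rfl
    intro r hr
    rw [Finset.mem_range, Nat.lt_add_one_iff] at hr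
    simp only [hG', hr, if_true]
    exact (key_term l z ρ m n r (le_trans hr (min_le_left _ _))
      (le_trans hr (min_le_right _ _))).symm
  have hFsum : HasSum F (Complex.exp a * Complex.exp b * Complex.exp c) :=
    hG'sum.prod_fiberwise hfiber
  constructor
  · rw [hexp]; exact hFsum
  · -- absolute summability of F
    have hbound : ∀ p : ℕ × ℕ, ‖F p‖ ≤ ∑' r, ‖G' (p, r)‖ := by
      intro p
      have h1 := (hfiber p)
      have h2 : Summable fun r => ‖G' (p, r)‖ := sG'.prod_factor p
      calc ‖F p‖ = ‖∑' r, G' (p, r)‖ := by rw [h1.tsum_eq]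
        _ ≤ ∑' r, ‖G' (p, r)‖ := norm_tsum_le_tsum_norm h2
    exact Summable.of_nonneg_of_le (fun p => norm_nonneg _) hbound sG'.prod
end
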